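/- arXiv:2105.01349 — 4 statements merged into one kernel-verified Lean document; each statement's English description precedes it below -/
import Mathlib

section
/- Vanishing of wave tails at +∞ (claim (3.8)). Let (φ, ψ) be any pair of C¹, bounded, nonnegative functions solving the wave-profile system (TWS) on all of ℝ. Then φ(z) → 0 and ψ(z) → 0 as z → +∞. -/
open MeasureTheory Filter Topology

def KernelGood (J : ℝ → ℝ) : Prop :=
  Continuous J ∧ (∀ y, 0 ≤ J y) ∧ HasCompactSupport J ∧
    (∫ y : ℝ, J y) = 1 ∧ (∀ y, J (-y) = J y)

def AlphaGood (α : ℝ → ℝ) : Prop :=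
  Continuous α ∧ Monotone α ∧
    (∃ L : ℝ, L < 0 ∧ Tendsto α atBot (nhds L)) ∧
    Tendsto α atTop (nhds 1)

/-- The wave-profile system (TWS): `φ, ψ` are C¹, bounded, and satisfy the
nonlocal profile equations on all of ℝ. -/
def IsTWS (d₁ d₂ r₁ r₂ a b s : ℝ) (J₁ J₂ α φ ψ : ℝ → ℝ) : Prop :=
  ContDiff ℝ 1 φ ∧ ContDiff ℝ 1 ψ ∧
  (∃ M : ℝ, ∀ z, |φ z| ≤ M) ∧ (∃ M : ℝ, ∀ z, |ψ z| ≤ M) ∧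
  (∀ z : ℝ, s * deriv φ z =
    d₁ * ((∫ y : ℝ, J₁ (z - y) * φ y) - φ z) +
      r₁ * φ z * (α (-z) - φ z - a * ψ z)) ∧
  (∀ z : ℝ, s * deriv ψ z =
    d₂ * ((∫ y : ℝ, J₂ (z - y) * ψ y) - ψ z) +
      r₂ * ψ z * (-1 + b * φ z - ψ z))

/-- Barrier lemma: if a nonnegative differentiable function has derivative
at most `-c < 0` wherever (far out) its value is at least `θ`, then it is
eventually below `θ`. -/
lemma eventually_lt_of_deriv_neg (f : ℝ → ℝ) (hf : Differentiable ℝ f)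
    (hf0 : ∀ z, 0 ≤ f z) (θ c Z : ℝ) (hc : 0 < c)
    (H : ∀ z, Z ≤ z → θ ≤ f z → deriv f z ≤ -c) :
    ∀ᶠ z in atTop, f z < θ := by
  -- Step 1: there is some z₁ ≥ Z with f z₁ < θ.
  have step1 : ∃ z₁, Z ≤ z₁ ∧ f z₁ < θ := by
    by_contra h
    push_neg at h
    -- then deriv f ≤ -c on all of [Z, ∞)
    have key : ∀ x ∈ interior (Set.Ici Z), deriv f x ≤ -c := by
      intro x hx
      rw [interior_Ici] at hx
      exact H x (le_of_lt hx) (h x (le_of_lt hx))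
    have := (convex_Ici Z).image_sub_le_mul_sub_of_deriv_le
      hf.continuous.continuousOn (hf.differentiableOn) key
      Z Set.self_mem_Ici (Z + (f Z + 1) / c)
      (by
        have : 0 ≤ (f Z + 1) / c := div_nonneg (by linarith [hf0 Z]) hc.le
        simp [le_add_iff_nonneg_right, this])
      (by
        have : 0 ≤ (f Z + 1) / c := div_nonneg (by linarith [hf0 Z]) hc.le
        simp [le_add_iff_nonneg_right, this])
    have h2 : f (Z + (f Z + 1) / c) - f Z ≤ -c * ((f Z + 1) / c) := by
      simpa using this
    have h3 : -c * ((f Z + 1) / c) = -(f Z + 1) := by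
      field_simp
    rw [h3] at h2
    have := hf0 (Z + (f Z + 1) / c)
    linarith
  obtain ⟨z₁, hz₁Z, hz₁⟩ := step1
  -- Step 2: f stays below θ after z₁.
  rw [eventually_atTop]
  refine ⟨z₁, fun z₂ hz₂ => ?_⟩
  by_contra hcon
  push_neg at hcon
  have hne : z₁ < z₂ := by
    rcases lt_or_eq_of_le hz₂ with h | h
    · exact h
    · exact absurd hcon (by rw [← h]; exact not_le.2 hz₁)
  set S : Set ℝ := {z ∈ Set.Icc z₁ z₂ | θ ≤ f z} with hS
  have hSclosed : IsClosed S := by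
    have hSeq : S = Set.Icc z₁ z₂ ∩ {z | θ ≤ f z} := by
      ext x; simp [hS, Set.mem_sep_iff, Set.mem_inter_iff]
    rw [hSeq]
    exact isClosed_Icc.inter (isClosed_le continuous_const hf.continuous)
  have hSne : S.Nonempty := ⟨z₂, ⟨le_of_lt hne, le_refl _⟩, hcon⟩
  have hSbdd : BddBelow S := ⟨z₁, fun x hx => hx.1.1⟩
  set w := sInf S with hw
  have hwS : w ∈ S := hSclosed.csInf_mem hSne hSbdd
  have hwz₁ : z₁ < w := by
    rcases lt_or_eq_of_le hwS.1.1 with h | h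
    · exact h
    · exact absurd hwS.2 (by rw [← h]; exact not_le.2 hz₁)
  have hlt : ∀ z, z₁ ≤ z → z < w → f z < θ := by
    intro z hz hzw
    by_contra hc2
    push_neg at hc2
    have : z ∈ S := ⟨⟨hz, le_trans hzw.le hwS.1.2⟩, hc2⟩
    exact absurd (csInf_le hSbdd this) (not_le.2 hzw)
  -- f w = θ
  have hfw : f w = θ := by
    refine le_antisymm ?_ hwS.2
    by_contra h
    push_neg at h
    -- f > θ on a left-neighborhood of w by continuity, contradicting hlt
    have hcont : ContinuousAt f w := hf.continuous.continuousAt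
    have : ∀ᶠ z in 𝓝 w, θ < f z := hcont (Ioi_mem_nhds h)
    have h2 : ∀ᶠ z in 𝓝[<] w, θ < f z := this.filter_mono nhdsWithin_le_nhds
    have h3 : ∀ᶠ z in 𝓝[<] w, z₁ < z := eventually_nhdsWithin_of_eventually_nhds
      (eventually_gt_nhds hwz₁)
    have h4 : ∀ᶠ z in 𝓝[<] w, z < w := eventually_mem_nhdsWithin.mono fun z hz => hz
    obtain ⟨z, hz1, hz2, hz3⟩ := (h2.and (h3.and h4)).exists
    exact absurd (hlt z hz2.le hz3) (not_lt.2 hz1.le)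
  -- derivative at w is ≤ -c, so f > θ just to the left, contradiction
  have hder : deriv f w ≤ -c := H w (le_trans hz₁Z (le_of_lt hwz₁)) (le_of_eq hfw.symm)
  have hslope : Tendsto (slope f w) (𝓝[≠] w) (𝓝 (deriv f w)) :=
    hasDerivAt_iff_tendsto_slope.1 (hf w).hasDerivAt
  have hslope' : Tendsto (slope f w) (𝓝[<] w) (𝓝 (deriv f w)) :=
    hslope.mono_left (nhdsWithin_mono w fun z hz => ne_of_lt hz)
  have hneg : ∀ᶠ z in 𝓝[<] w, slope f w z < 0 :=
    hslope' (Iio_mem_nhds (lt_of_le_of_lt hder (by linarith)))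
  have h3 : ∀ᶠ z in 𝓝[<] w, z₁ < z := eventually_nhdsWithin_of_eventually_nhds
    (eventually_gt_nhds hwz₁)
  have h4 : ∀ᶠ z in 𝓝[<] w, z < w := eventually_mem_nhdsWithin.mono fun z hz => hz
  obtain ⟨z, hz1, hz2, hz3⟩ := (hneg.and (h3.and h4)).exists
  have hslz : slope f w z = (f z - f w) / (z - w) := slope_def_field f w z
  rw [hslz] at hz1
  have hzt : f z < θ := hlt z hz2.le hz3
  have hzw : z - w < 0 := by linarith
  rcases div_neg_iff.mp hz1 with ⟨h1, h2⟩ | ⟨h1, h2⟩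
  · linarith
  · linarith

/-- Generic tail-vanishing lemma for a scalar nonlocal profile inequality. -/
lemma tail_vanish (d r s κ : ℝ) (hd : 0 < d) (hr : 0 < r) (hs : 0 < s) (hκ : κ < 0)
    (J f g : ℝ → ℝ) (hJc : Continuous J) (hJ0 : ∀ y, 0 ≤ J y)
    (hJcs : HasCompactSupport J) (hJ1 : (∫ y : ℝ, J y) = 1)
    (hfC : ContDiff ℝ 1 f) (M : ℝ) (hfM : ∀ z, |f z| ≤ M) (hf0 : ∀ z, 0 ≤ f z)
    (heq : ∀ z, s * deriv f z ≤ d * ((∫ y : ℝ, J (z - y) * f y) - f z) + r * f z * g z)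
    (hg : ∀ᶠ z in atTop, g z ≤ κ) :
    Tendsto f atTop (nhds 0) := by
  have hfcont : Continuous f := hfC.continuous
  have hfdiff : Differentiable ℝ f := hfC.differentiable one_ne_zero
  -- kernel support radius
  obtain ⟨R, hR⟩ := hJcs.isBounded.subset_closedBall (0 : ℝ)
  -- boundedness for limsup machinery
  have hbddAbove : IsBoundedUnder (· ≤ ·) atTop f :=
    isBoundedUnder_of ⟨M, fun z => (abs_le.1 (hfM z)).2⟩
  have hbddBelow : IsBoundedUnder (· ≥ ·) atTop f :=
    isBoundedUnder_of ⟨0, fun z => hf0 z⟩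
  set m := limsup f atTop with hm
  have hm0 : 0 ≤ m :=
    le_limsup_of_frequently_le ((Eventually.of_forall hf0).frequently) hbddAbove
  -- main claim : m ≤ 0
  have hmle : m ≤ 0 := by
    by_contra hcon
    push_neg at hcon
    -- choose ε
    set ε : ℝ := min (m / 4) (r * m * (-κ) / (16 * d)) with hε
    have hε0 : 0 < ε := by
      apply lt_min
      · linarith
      · apply div_pos
        · have : 0 < -κ := by linarith
          positivity
        · positivity
    have hεm : ε ≤ m / 4 := min_le_left _ _
    have hεd : ε ≤ r * m * (-κ) / (16 * d) := min_le_right _ _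
    set θ := m - ε with hθ
    set c := r * m * (-κ) / (8 * s) with hc
    have hc0 : 0 < c := by
      apply div_pos
      · have : 0 < -κ := by linarith
        positivity
      · positivity
    -- eventually f ≤ m + ε
    have hev : ∀ᶠ z in atTop, f z < m + ε :=
      eventually_lt_of_limsup_lt (by linarith) hbddAbove
    obtain ⟨Z₀, hZ₀⟩ := eventually_atTop.1 hev
    obtain ⟨Z₁, hZ₁⟩ := eventually_atTop.1 hg
    set Z := max (Z₀ + R) Z₁ with hZdef
    -- derivative bound
    have Hkey : ∀ z, Z ≤ z → θ ≤ f z → deriv f z ≤ -c := by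
      intro z hz hfz
      have hzZ0 : Z₀ + R ≤ z := le_trans (le_max_left _ _) hz
      have hzZ1 : Z₁ ≤ z := le_trans (le_max_right _ _) hz
      -- convolution bound
      have hint1 : Integrable (fun y : ℝ => J (z - y) * f y) := by
        have h1 : Continuous (fun y : ℝ => J (z - y)) :=
          hJc.comp (continuous_const.sub continuous_id)
        have h2 : HasCompactSupport (fun y : ℝ => J (z - y)) :=
          hJcs.comp_homeomorph (Homeomorph.subLeft z)
        exact (h1.mul hfcont).integrable_of_hasCompactSupport h2.mul_right
      have hint2 : Integrable (fun y : ℝ => J (z - y) * (m + ε)) := by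
        have h1 : Continuous (fun y : ℝ => J (z - y)) :=
          hJc.comp (continuous_const.sub continuous_id)
        have h2 : HasCompactSupport (fun y : ℝ => J (z - y)) :=
          hJcs.comp_homeomorph (Homeomorph.subLeft z)
        exact (h1.mul continuous_const).integrable_of_hasCompactSupport h2.mul_right
      have hconv : (∫ y : ℝ, J (z - y) * f y) ≤ m + ε := by
        have hmono : ∀ y : ℝ, J (z - y) * f y ≤ J (z - y) * (m + ε) := by
          intro y
          by_cases hy : J (z - y) = 0
          · simp [hy]
          · have hymem : (z - y) ∈ tsupport J := subset_tsupport J hy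
            have : |z - y| ≤ R := by
              have := hR hymem
              simpa [Real.dist_eq] using this
            have hyZ : Z₀ ≤ y := by
              have := abs_le.1 this
              linarith
            exact mul_le_mul_of_nonneg_left (le_of_lt (hZ₀ y hyZ)) (hJ0 _)
        calc (∫ y : ℝ, J (z - y) * f y) ≤ ∫ y : ℝ, J (z - y) * (m + ε) :=
              integral_mono hint1 hint2 hmono
          _ = (∫ y : ℝ, J (z - y)) * (m + ε) := by
              rw [← integral_mul_const]
          _ = m + ε := by
              rw [MeasureTheory.integral_sub_left_eq_self J volume z, hJ1, one_mul]
      -- assemble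
      have hgz : g z ≤ κ := hZ₁ z hzZ1
      have hfθ : m / 2 ≤ f z := by
        have : m / 2 ≤ θ := by rw [hθ]; linarith
        linarith
      have h1 : d * ((∫ y : ℝ, J (z - y) * f y) - f z) ≤ d * (2 * ε) := by
        apply mul_le_mul_of_nonneg_left _ hd.le
        have : θ ≤ f z := hfz
        rw [hθ] at this
        linarith
      have h2 : r * f z * g z ≤ r * (m / 2) * κ := by
        have hfz0 : 0 < f z := lt_of_lt_of_le (by linarith) hfθ
        have ha : r * f z * g z ≤ r * f z * κ :=
          mul_le_mul_of_nonneg_left hgz (by positivity)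
        have hb : r * f z * κ ≤ r * (m / 2) * κ := by
          have : r * (m / 2) ≤ r * f z := mul_le_mul_of_nonneg_left hfθ hr.le
          nlinarith [hκ]
        linarith
      have h3 : d * (2 * ε) ≤ r * m * (-κ) / 8 := by
        have := mul_le_mul_of_nonneg_left hεd hd.le
        have hd' : d * (r * m * (-κ) / (16 * d)) = r * m * (-κ) / 16 := by
          field_simp
        nlinarith
      have h4 : r * (m / 2) * κ = -(r * m * (-κ)) / 2 := by ring
      have h5 : s * deriv f z ≤ -(r * m * (-κ)) / 2 + r * m * (-κ) / 8 := by
        have := heq z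
        rw [h4] at h2
        linarith
      have hX : 0 < r * m * (-κ) := by
        have : 0 < -κ := by linarith
        positivity
      have hsc : s * c = r * m * (-κ) / 8 := by
        have hs' : s ≠ 0 := ne_of_gt hs
        rw [hc]
        field_simp
      have h6 : -(r * m * (-κ)) / 2 + r * m * (-κ) / 8 ≤ -(s * c) := by
        rw [hsc]; linarith
      have h7 : s * deriv f z ≤ s * (-c) := by
        have := le_trans h5 h6
        linarith
      exact le_of_mul_le_mul_left h7 hs
    -- apply barrier lemma
    have hevlt : ∀ᶠ z in atTop, f z < θ :=
      eventually_lt_of_deriv_neg f hfdiff hf0 θ c Z hc0 Hkey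
    have : m ≤ θ := limsup_le_of_le hbddBelow.isCoboundedUnder_le
      (hevlt.mono fun z hz => hz.le)
    rw [hθ] at this
    linarith
  -- conclude
  rw [show (0:ℝ) = 0 from rfl]
  have : ∀ ε > (0:ℝ), ∀ᶠ z in atTop, |f z| < ε := by
    intro ε hε
    have : ∀ᶠ z in atTop, f z < ε :=
      eventually_lt_of_limsup_lt (lt_of_le_of_lt hmle hε) hbddAbove
    exact this.mono fun z hz => by
      rw [abs_of_nonneg (hf0 z)]; exact hz
  rw [Metric.tendsto_nhds]
  intro ε hε
  exact (this ε hε).mono fun z hz => by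
    rw [Real.dist_eq, sub_zero]; exact hz

/-- Claim (3.8): vanishing of wave tails at +∞ for any nonnegative bounded
C¹ solution of (TWS). -/
theorem wave_tails_vanish_at_top
    (d₁ d₂ r₁ r₂ a b s : ℝ)
    (hd₁ : 0 < d₁) (hd₂ : 0 < d₂) (hr₁ : 0 < r₁) (hr₂ : 0 < r₂)
    (ha : 0 < a) (hb : 1 < b) (hs : 0 < s)
    (J₁ J₂ α : ℝ → ℝ)
    (hJ₁ : KernelGood J₁) (hJ₂ : KernelGood J₂) (hα : AlphaGood α)
    (φ ψ : ℝ → ℝ)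
    (htws : IsTWS d₁ d₂ r₁ r₂ a b s J₁ J₂ α φ ψ)
    (hφ : ∀ z, 0 ≤ φ z) (hψ : ∀ z, 0 ≤ ψ z) :
    Tendsto φ atTop (nhds 0) ∧ Tendsto ψ atTop (nhds 0) := by
  obtain ⟨hφC, hψC, ⟨M₁, hM₁⟩, ⟨M₂, hM₂⟩, heq₁, heq₂⟩ := htws
  obtain ⟨hαc, hαmono, ⟨L, hL, hLlim⟩, hα1⟩ := hα
  obtain ⟨hJ₁c, hJ₁0, hJ₁cs, hJ₁1, _⟩ := hJ₁
  obtain ⟨hJ₂c, hJ₂0, hJ₂cs, hJ₂1, _⟩ := hJ₂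
  -- eventually α(-z) ≤ L/2
  have hαev : ∀ᶠ z in atTop, α (-z) ≤ L / 2 := by
    have h1 : ∀ᶠ x in atBot, α x < L / 2 :=
      hLlim.eventually_lt_const (by linarith)
    have h2 : Tendsto (fun z : ℝ => -z) atTop atBot := tendsto_neg_atTop_atBot
    exact (h2.eventually h1).mono fun z hz => hz.le
  -- φ tends to 0
  have hφ0 : Tendsto φ atTop (nhds 0) := by
    apply tail_vanish d₁ r₁ s (L / 2) hd₁ hr₁ hs (by linarith)
      J₁ φ (fun z => α (-z) - φ z - a * ψ z) hJ₁c hJ₁0 hJ₁cs hJ₁1 hφC M₁ hM₁ hφ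
    · intro z
      rw [heq₁ z]
    · exact hαev.mono fun z hz => by
        have := hφ z
        have := hψ z
        nlinarith
  -- ψ tends to 0
  have hψ0 : Tendsto ψ atTop (nhds 0) := by
    apply tail_vanish d₂ r₂ s (-(1/2)) hd₂ hr₂ hs (by norm_num)
      J₂ ψ (fun z => -1 + b * φ z - ψ z) hJ₂c hJ₂0 hJ₂cs hJ₂1 hψC M₂ hM₂ hψ
    · intro z
      rw [heq₂ z]
    · have : ∀ᶠ z in atTop, b * φ z < 1 / 2 := by
        have : Tendsto (fun z => b * φ z) atTop (nhds (b * 0)) := hφ0.const_mul b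
        rw [mul_zero] at this
        exact this.eventually_lt_const (by norm_num)
      exact this.mono fun z hz => by
        have := hψ z
        linarith
  exact ⟨hφ0, hψ0⟩
end

section
/- Convergence of wave tails to the coexistence state at −∞ (Lemma 3.4). Assume b > 1 and ab < 1. Let (φ, ψ) be a pair of C¹ functions solving the wave-profile system (TWS) on all of ℝ with 0 ≤ φ ≤ 1 and 0 ≤ ψ ≤ b − 1, and suppose liminf_{z→−∞} φ(z) ≥ 1 − a(b−1) and liminf_{z→−∞} ψ(z) ≥ (b−1)(1−ab). Then φ(z) → u_* and ψ(z) → v_* as z → −∞, where (u_*, v_*) := ((1+a)/(1+ab), (b−1)/(1+ab)). -/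
open MeasureTheory Filter Topology

open Set

private lemma le_add_eps {a b : ℝ} (h : ∀ ε : ℝ, 0 < ε → a ≤ b + ε) : a ≤ b := by
  by_contra h'
  push_neg at h'
  have := h ((a - b) / 2) (by linarith)
  linarith

private lemma seq_limsup_deriv (f : ℝ → ℝ) (hf : Differentiable ℝ f)
    (hbd : Filter.IsBoundedUnder (· ≤ ·) atBot f)
    (hcb : Filter.IsCoboundedUnder (· ≤ ·) atBot f) :
    ∃ w : ℕ → ℝ, Tendsto w atTop atBot ∧
      Tendsto (fun n => f (w n)) atTop (𝓝 (limsup f atBot)) ∧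
      Tendsto (fun n => deriv f (w n)) atTop (𝓝 0) := by
  set M := limsup f atBot with hM
  have key : ∀ ε : ℝ, 0 < ε → ε ≤ 1 → ∀ Z : ℝ,
      ∃ c, c ≤ Z ∧ |f c - M| ≤ ε ∧ |deriv f c| ≤ ε := by
    intro ε hε hε1 Z
    set δ := ε ^ 2 / 8 with hδdef
    have hδpos : 0 < δ := by positivity
    have hδε : δ ≤ ε := by nlinarith
    have h1 : ∀ᶠ z in atBot, f z < M + δ :=
      eventually_lt_of_limsup_lt (by linarith) hbd
    obtain ⟨Z₁, hZ₁⟩ := eventually_atBot.1 h1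
    have h2 : ∃ᶠ z in atBot, M - δ < f z :=
      frequently_lt_of_lt_limsup hcb (by linarith)
    obtain ⟨w, hwle, hwgt⟩ := frequently_atBot.1 h2 (min Z₁ Z - 1)
    set K := ε / 2 with hK
    have hKpos : 0 < K := by positivity
    set g : ℝ → ℝ := fun z => f z - K * (z - w) ^ 2 with hg
    have hgcont : Continuous g := hf.continuous.sub (by continuity)
    obtain ⟨c, hcmem, hcmax⟩ := (isCompact_Icc (a := w - 1) (b := w + 1)).exists_isMaxOn
      (Set.nonempty_Icc.2 (by linarith)) hgcont.continuousOn
    have hwmem : w ∈ Set.Icc (w - 1) (w + 1) := ⟨by linarith, by linarith⟩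
    have hgcw : g w ≤ g c := hcmax hwmem
    have hcZ : c ≤ min Z₁ Z := by
      have := hcmem.2
      have := le_min_iff.1 (le_of_eq (rfl : min Z₁ Z = min Z₁ Z))
      linarith [hcmem.2, hwle]
    have hfc_lt : f c < M + δ := hZ₁ c (le_trans hcZ (min_le_left _ _))
    have hgw : g w = f w := by simp [hg]
    have hgle : g c ≤ f c := by
      have : 0 ≤ K * (c - w) ^ 2 := by positivity
      simp only [hg]; linarith
    have hsq : K * (c - w) ^ 2 ≤ 2 * δ := by
      have h3 : f w ≤ g c := by rw [← hgw]; exact hgcw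
      have h4 : g c = f c - K * (c - w) ^ 2 := rfl
      nlinarith [hwgt, hfc_lt]
    have hcw2 : (c - w) ^ 2 ≤ ε / 2 := by
      rw [hK] at hsq
      rw [hδdef] at hsq
      nlinarith
    have hcw1 : |c - w| < 1 := by
      rw [abs_lt]
      constructor <;> nlinarith [sq_nonneg (c - w)]
    have hcint : c ∈ Set.Ioo (w - 1) (w + 1) := by
      rcases abs_lt.1 hcw1 with ⟨h5, h6⟩
      exact ⟨by linarith, by linarith⟩
    have hlm : IsLocalMax g c := hcmax.isLocalMax (Icc_mem_nhds hcint.1 hcint.2)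
    have hder : HasDerivAt g (deriv f c - K * (((2 : ℕ) : ℝ) * (c - w) ^ (2 - 1) * 1)) c :=
      ((hf c).hasDerivAt).sub ((((hasDerivAt_id c).sub_const w).pow 2).const_mul K)
    have h0 := hlm.hasDerivAt_eq_zero hder
    have hdval : deriv f c = ε * (c - w) := by
      have : deriv f c = K * (((2 : ℕ) : ℝ) * (c - w) ^ (2 - 1) * 1) := by linarith
      rw [this, hK]
      push_cast
      ring
    refine ⟨c, le_trans hcZ (min_le_right _ _), ?_, ?_⟩
    · rw [abs_le]
      constructor
      · have h3 : f w ≤ g c := by rw [← hgw]; exact hgcw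
        have h4 : g c ≤ f c := hgle
        linarith
      · linarith
    · rw [hdval, abs_mul, abs_of_pos hε]
      nlinarith [abs_nonneg (c - w), le_of_lt hcw1]
  have hpos : ∀ n : ℕ, (0 : ℝ) < 1 / (n + 1) := by
    intro n; positivity
  have hle1 : ∀ n : ℕ, (1 : ℝ) / (n + 1) ≤ 1 := by
    intro n
    rw [div_le_one (by positivity)]
    linarith [Nat.cast_nonneg (α := ℝ) n]
  choose c hc1 hc2 hc3 using fun n : ℕ => key (1 / (n + 1)) (hpos n) (hle1 n) (-(n : ℝ))
  refine ⟨c, ?_, ?_, ?_⟩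
  · exact tendsto_atBot_mono hc1 (tendsto_neg_atTop_atBot.comp tendsto_natCast_atTop_atTop)
  · have h := squeeze_zero_norm (f := fun n => f (c n) - M) hc2
      tendsto_one_div_add_atTop_nhds_zero_nat
    exact tendsto_sub_nhds_zero_iff.1 h
  · exact squeeze_zero_norm hc3 tendsto_one_div_add_atTop_nhds_zero_nat


private lemma seq_liminf_deriv (f : ℝ → ℝ) (hf : Differentiable ℝ f)
    (hbd : Filter.IsBoundedUnder (· ≥ ·) atBot f)
    (hcb : Filter.IsCoboundedUnder (· ≥ ·) atBot f) :
    ∃ w : ℕ → ℝ, Tendsto w atTop atBot ∧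
      Tendsto (fun n => f (w n)) atTop (𝓝 (liminf f atBot)) ∧
      Tendsto (fun n => deriv f (w n)) atTop (𝓝 0) := by
  set M := liminf f atBot with hM
  have key : ∀ ε : ℝ, 0 < ε → ε ≤ 1 → ∀ Z : ℝ,
      ∃ c, c ≤ Z ∧ |f c - M| ≤ ε ∧ |deriv f c| ≤ ε := by
    intro ε hε hε1 Z
    set δ := ε ^ 2 / 8 with hδdef
    have hδpos : 0 < δ := by positivity
    have hδε : δ ≤ ε := by nlinarith
    have h1 : ∀ᶠ z in atBot, M - δ < f z :=
      eventually_lt_of_lt_liminf (by linarith) hbd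
    obtain ⟨Z₁, hZ₁⟩ := eventually_atBot.1 h1
    have h2 : ∃ᶠ z in atBot, f z < M + δ :=
      frequently_lt_of_liminf_lt hcb (by linarith)
    obtain ⟨w, hwle, hwgt⟩ := frequently_atBot.1 h2 (min Z₁ Z - 1)
    set K := ε / 2 with hK
    have hKpos : 0 < K := by positivity
    set g : ℝ → ℝ := fun z => f z + K * (z - w) ^ 2 with hg
    have hgcont : Continuous g := hf.continuous.add (by continuity)
    obtain ⟨c, hcmem, hcmin⟩ := (isCompact_Icc (a := w - 1) (b := w + 1)).exists_isMinOn
      (Set.nonempty_Icc.2 (by linarith)) hgcont.continuousOn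
    have hwmem : w ∈ Set.Icc (w - 1) (w + 1) := ⟨by linarith, by linarith⟩
    have hgcw : g c ≤ g w := hcmin hwmem
    have hcZ : c ≤ min Z₁ Z := by linarith [hcmem.2, hwle]
    have hfc_gt : M - δ < f c := hZ₁ c (le_trans hcZ (min_le_left _ _))
    have hgw : g w = f w := by simp [hg]
    have hgle : f c ≤ g c := by
      have : 0 ≤ K * (c - w) ^ 2 := by positivity
      simp only [hg]; linarith
    have hsq : K * (c - w) ^ 2 ≤ 2 * δ := by
      have h3 : g c ≤ f w := by rw [← hgw]; exact hgcw
      have h4 : g c = f c + K * (c - w) ^ 2 := rfl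
      nlinarith [hwgt, hfc_gt]
    have hcw2 : (c - w) ^ 2 ≤ ε / 2 := by
      rw [hK] at hsq
      rw [hδdef] at hsq
      nlinarith
    have hcw1 : |c - w| < 1 := by
      rw [abs_lt]
      constructor <;> nlinarith [sq_nonneg (c - w)]
    have hcint : c ∈ Set.Ioo (w - 1) (w + 1) := by
      rcases abs_lt.1 hcw1 with ⟨h5, h6⟩
      exact ⟨by linarith, by linarith⟩
    have hlm : IsLocalMin g c := hcmin.isLocalMin (Icc_mem_nhds hcint.1 hcint.2)
    have hder : HasDerivAt g (deriv f c + K * (((2 : ℕ) : ℝ) * (c - w) ^ (2 - 1) * 1)) c :=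
      ((hf c).hasDerivAt).add ((((hasDerivAt_id c).sub_const w).pow 2).const_mul K)
    have h0 := hlm.hasDerivAt_eq_zero hder
    have hdval : deriv f c = -(ε * (c - w)) := by
      have : deriv f c = -(K * (((2 : ℕ) : ℝ) * (c - w) ^ (2 - 1) * 1)) := by linarith
      rw [this, hK]
      push_cast
      ring
    refine ⟨c, le_trans hcZ (min_le_right _ _), ?_, ?_⟩
    · rw [abs_le]
      constructor
      · linarith
      · have h3 : g c ≤ f w := by rw [← hgw]; exact hgcw
        have h4 : f c ≤ g c := hgle
        linarith
    · rw [hdval, abs_neg, abs_mul, abs_of_pos hε]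
      nlinarith [abs_nonneg (c - w), le_of_lt hcw1]
  have hpos : ∀ n : ℕ, (0 : ℝ) < 1 / (n + 1) := by
    intro n; positivity
  have hle1 : ∀ n : ℕ, (1 : ℝ) / (n + 1) ≤ 1 := by
    intro n
    rw [div_le_one (by positivity)]
    linarith [Nat.cast_nonneg (α := ℝ) n]
  choose c hc1 hc2 hc3 using fun n : ℕ => key (1 / (n + 1)) (hpos n) (hle1 n) (-(n : ℝ))
  refine ⟨c, ?_, ?_, ?_⟩
  · exact tendsto_atBot_mono hc1 (tendsto_neg_atTop_atBot.comp tendsto_natCast_atTop_atTop)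
  · have h := squeeze_zero_norm (f := fun n => f (c n) - M) hc2
      tendsto_one_div_add_atTop_nhds_zero_nat
    exact tendsto_sub_nhds_zero_iff.1 h
  · exact squeeze_zero_norm hc3 tendsto_one_div_add_atTop_nhds_zero_nat


private lemma conv_integrable (J f : ℝ → ℝ) (hJc : Continuous J)
    (hJcs : HasCompactSupport J) (hf : Continuous f) (z : ℝ) :
    Integrable (fun y => J (z - y) * f y) := by
  apply Continuous.integrable_of_hasCompactSupport
  · exact (hJc.comp (continuous_const.sub continuous_id)).mul hf
  · exact (hJcs.comp_homeomorph (Homeomorph.subLeft z)).mul_right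

private lemma conv_one (J : ℝ → ℝ) (hJ1 : (∫ y : ℝ, J y) = 1) (z : ℝ) :
    (∫ y : ℝ, J (z - y)) = 1 := by
  rw [integral_sub_left_eq_self J volume z, hJ1]

private lemma conv_mem_Icc (J f : ℝ → ℝ) (hJc : Continuous J) (hJ0 : ∀ y, 0 ≤ J y)
    (hJcs : HasCompactSupport J) (hJ1 : (∫ y : ℝ, J y) = 1) (hf : Continuous f)
    (C : ℝ) (hfb : ∀ z, f z ∈ Set.Icc 0 C) (z : ℝ) :
    (∫ y : ℝ, J (z - y) * f y) ∈ Set.Icc (0 : ℝ) C := by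
  constructor
  · exact integral_nonneg fun y => mul_nonneg (hJ0 _) (hfb y).1
  · calc (∫ y : ℝ, J (z - y) * f y) ≤ ∫ y : ℝ, J (z - y) * C := by
          apply integral_mono (conv_integrable J f hJc hJcs hf z)
            (conv_integrable J (fun _ => C) hJc hJcs continuous_const z)
          intro y
          exact mul_le_mul_of_nonneg_left (hfb y).2 (hJ0 _)
      _ = C := by
          rw [integral_mul_const, conv_one J hJ1 z, one_mul]

private lemma conv_eventually_le (J f : ℝ → ℝ) (hJc : Continuous J) (hJ0 : ∀ y, 0 ≤ J y)
    (hJcs : HasCompactSupport J) (hJ1 : (∫ y : ℝ, J y) = 1) (hf : Continuous f)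
    {A : ℝ} (hA : ∀ᶠ z in atBot, f z ≤ A) :
    ∀ᶠ z in atBot, (∫ y : ℝ, J (z - y) * f y) ≤ A := by
  obtain ⟨Z, hZ⟩ := eventually_atBot.1 hA
  obtain ⟨R, hR⟩ := hJcs.isCompact.isBounded.subset_closedBall 0
  rw [eventually_atBot]
  refine ⟨Z - max R 0, fun z hz => ?_⟩
  have hle : ∀ y, J (z - y) * f y ≤ J (z - y) * A := by
    intro y
    rcases eq_or_lt_of_le (hJ0 (z - y)) with h | h
    · rw [← h]; simp
    · have hy : z - y ∈ tsupport J :=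
        subset_tsupport J (Function.mem_support.2 (ne_of_gt h))
      have h6 : |z - y| ≤ R := by
        have := hR hy
        rwa [Metric.mem_closedBall, Real.dist_eq, sub_zero] at this
      have hyle : y ≤ Z := by
        have h7 := (abs_le.1 h6).1
        have h8 : R ≤ max R 0 := le_max_left _ _
        linarith
      exact mul_le_mul_of_nonneg_left (hZ y hyle) (le_of_lt h)
  calc (∫ y : ℝ, J (z - y) * f y) ≤ ∫ y : ℝ, J (z - y) * A :=
        integral_mono (conv_integrable J f hJc hJcs hf z)
          (conv_integrable J (fun _ => A) hJc hJcs continuous_const z) hle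
    _ = A := by rw [integral_mul_const, conv_one J hJ1 z, one_mul]

private lemma conv_eventually_ge (J f : ℝ → ℝ) (hJc : Continuous J) (hJ0 : ∀ y, 0 ≤ J y)
    (hJcs : HasCompactSupport J) (hJ1 : (∫ y : ℝ, J y) = 1) (hf : Continuous f)
    {A : ℝ} (hA : ∀ᶠ z in atBot, A ≤ f z) :
    ∀ᶠ z in atBot, A ≤ (∫ y : ℝ, J (z - y) * f y) := by
  obtain ⟨Z, hZ⟩ := eventually_atBot.1 hA
  obtain ⟨R, hR⟩ := hJcs.isCompact.isBounded.subset_closedBall 0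
  rw [eventually_atBot]
  refine ⟨Z - max R 0, fun z hz => ?_⟩
  have hle : ∀ y, J (z - y) * A ≤ J (z - y) * f y := by
    intro y
    rcases eq_or_lt_of_le (hJ0 (z - y)) with h | h
    · rw [← h]; simp
    · have hy : z - y ∈ tsupport J :=
        subset_tsupport J (Function.mem_support.2 (ne_of_gt h))
      have h6 : |z - y| ≤ R := by
        have := hR hy
        rwa [Metric.mem_closedBall, Real.dist_eq, sub_zero] at this
      have hyle : y ≤ Z := by
        have h7 := (abs_le.1 h6).1
        have h8 : R ≤ max R 0 := le_max_left _ _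
        linarith
      exact mul_le_mul_of_nonneg_left (hZ y hyle) (le_of_lt h)
  calc A = ∫ y : ℝ, J (z - y) * A := by
        rw [integral_mul_const, conv_one J hJ1 z, one_mul]
    _ ≤ ∫ y : ℝ, J (z - y) * f y :=
        integral_mono (conv_integrable J (fun _ => A) hJc hJcs continuous_const z)
          (conv_integrable J f hJc hJcs hf z) hle

private lemma tail_relation
    (d r s lam βinf : ℝ) (hd : 0 < d)
    (J β F G : ℝ → ℝ)
    (hJc : Continuous J) (hJ0 : ∀ y, 0 ≤ J y) (hJcs : HasCompactSupport J)
    (hJ1 : (∫ y : ℝ, J y) = 1)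
    (hF : Continuous F) (hG : Continuous G)
    (CF CG : ℝ) (hFb : ∀ z, F z ∈ Set.Icc 0 CF) (hGb : ∀ z, G z ∈ Set.Icc 0 CG)
    (hβ : Tendsto β atBot (𝓝 βinf))
    (heq : ∀ z, s * deriv F z =
      d * ((∫ y : ℝ, J (z - y) * F y) - F z) + r * F z * (β z + lam * G z - F z))
    (w : ℕ → ℝ) (hw : Tendsto w atTop atBot) (L : ℝ)
    (hFw : Tendsto (fun n => F (w n)) atTop (𝓝 L))
    (hF'w : Tendsto (fun n => deriv F (w n)) atTop (𝓝 0)) :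
    ∃ p v : ℝ,
      liminf F atBot ≤ p ∧ p ≤ limsup F atBot ∧
      liminf G atBot ≤ v ∧ v ≤ limsup G atBot ∧
      0 = d * (p - L) + r * L * (βinf + lam * v - L) := by
  -- boundedness facts
  have hFbdle : Filter.IsBoundedUnder (· ≤ ·) atBot F :=
    Filter.isBoundedUnder_of ⟨CF, fun z => (hFb z).2⟩
  have hFbdge : Filter.IsBoundedUnder (· ≥ ·) atBot F :=
    Filter.isBoundedUnder_of ⟨0, fun z => (hFb z).1⟩
  have hGbdle : Filter.IsBoundedUnder (· ≤ ·) atBot G :=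
    Filter.isBoundedUnder_of ⟨CG, fun z => (hGb z).2⟩
  have hGbdge : Filter.IsBoundedUnder (· ≥ ·) atBot G :=
    Filter.isBoundedUnder_of ⟨0, fun z => (hGb z).1⟩
  set K : ℝ → ℝ := fun z => ∫ y : ℝ, J (z - y) * F y with hK
  have hKb : ∀ z, K z ∈ Set.Icc (0 : ℝ) CF :=
    fun z => conv_mem_Icc J F hJc hJ0 hJcs hJ1 hF CF hFb z
  -- first subsequence: G ∘ w converges
  obtain ⟨v, -, σ₁, hσ₁, hGv⟩ :=
    tendsto_subseq_of_bounded (Metric.isBounded_Icc (0 : ℝ) CG) (fun n => hGb (w n))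
  -- second subsequence: K ∘ w ∘ σ₁ converges
  obtain ⟨p, -, σ₂, hσ₂, hKp⟩ :=
    tendsto_subseq_of_bounded (Metric.isBounded_Icc (0 : ℝ) CF)
      (fun n => hKb (w (σ₁ n)))
  set W : ℕ → ℝ := fun n => w (σ₁ (σ₂ n)) with hW
  have hσ : StrictMono (σ₁ ∘ σ₂) := hσ₁.comp hσ₂
  have hWb : Tendsto W atTop atBot := hw.comp hσ.tendsto_atTop
  have hFW : Tendsto (fun n => F (W n)) atTop (𝓝 L) :=
    hFw.comp hσ.tendsto_atTop
  have hF'W : Tendsto (fun n => deriv F (W n)) atTop (𝓝 0) :=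
    hF'w.comp hσ.tendsto_atTop
  have hGW : Tendsto (fun n => G (W n)) atTop (𝓝 v) := hGv.comp hσ₂.tendsto_atTop
  have hKW : Tendsto (fun n => K (W n)) atTop (𝓝 p) := hKp
  have hβW : Tendsto (fun n => β (W n)) atTop (𝓝 βinf) := hβ.comp hWb
  -- pass to the limit in the equation
  have hlhs : Tendsto (fun n => s * deriv F (W n)) atTop (𝓝 0) := by
    have := hF'W.const_mul s
    simpa using this
  have hrhs : Tendsto
      (fun n => d * (K (W n) - F (W n)) + r * F (W n) * (β (W n) + lam * G (W n) - F (W n)))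
      atTop (𝓝 (d * (p - L) + r * L * (βinf + lam * v - L))) := by
    exact ((hKW.sub hFW).const_mul d).add
      (((hFW.const_mul r).mul ((hβW.add (hGW.const_mul lam)).sub hFW)))
  have heqn : (fun n => s * deriv F (W n)) =
      fun n => d * (K (W n) - F (W n)) + r * F (W n) * (β (W n) + lam * G (W n) - F (W n)) := by
    funext n
    exact heq (W n)
  rw [heqn] at hlhs
  have hrel : (0 : ℝ) = d * (p - L) + r * L * (βinf + lam * v - L) :=
    tendsto_nhds_unique hlhs hrhs
  -- bounds on p
  have hp2 : p ≤ limsup F atBot := by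
    apply le_add_eps
    intro ε hε
    have h1 : ∀ᶠ z in atBot, F z ≤ limsup F atBot + ε := by
      have := eventually_lt_of_limsup_lt
        (show limsup F atBot < limsup F atBot + ε by linarith) hFbdle
      exact this.mono fun z hz => le_of_lt hz
    have h2 := conv_eventually_le J F hJc hJ0 hJcs hJ1 hF h1
    have h3 : ∀ᶠ n in atTop, K (W n) ≤ limsup F atBot + ε := hWb.eventually h2
    exact le_of_tendsto hKW h3
  have hp1 : liminf F atBot ≤ p := by
    have h0 : ∀ ε : ℝ, 0 < ε → liminf F atBot ≤ p + ε := by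
      intro ε hε
      have h1 : ∀ᶠ z in atBot, liminf F atBot - ε ≤ F z := by
        have := eventually_lt_of_lt_liminf
          (show liminf F atBot - ε < liminf F atBot by linarith) hFbdge
        exact this.mono fun z hz => le_of_lt hz
      have h2 := conv_eventually_ge J F hJc hJ0 hJcs hJ1 hF h1
      have h3 : ∀ᶠ n in atTop, liminf F atBot - ε ≤ K (W n) := hWb.eventually h2
      have := ge_of_tendsto hKW h3
      linarith
    exact le_add_eps h0
  -- bounds on v
  have hv2 : v ≤ limsup G atBot := by
    apply le_add_eps
    intro ε hε
    have h1 : ∀ᶠ z in atBot, G z ≤ limsup G atBot + ε := by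
      have := eventually_lt_of_limsup_lt
        (show limsup G atBot < limsup G atBot + ε by linarith) hGbdle
      exact this.mono fun z hz => le_of_lt hz
    exact le_of_tendsto hGW (hWb.eventually h1)
  have hv1 : liminf G atBot ≤ v := by
    apply le_add_eps
    intro ε hε
    have h1 : ∀ᶠ z in atBot, liminf G atBot - ε ≤ G z := by
      have := eventually_lt_of_lt_liminf
        (show liminf G atBot - ε < liminf G atBot by linarith) hGbdge
      exact this.mono fun z hz => le_of_lt hz
    have := ge_of_tendsto hGW (hWb.eventually h1)
    linarith
  exact ⟨p, v, hp1, hp2, hv1, hv2, hrel⟩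

/-- Lemma 3.4: convergence of wave tails to the coexistence state at -∞. -/
theorem wave_tails_coexistence_at_bot
    (d₁ d₂ r₁ r₂ a b s : ℝ)
    (hd₁ : 0 < d₁) (hd₂ : 0 < d₂) (hr₁ : 0 < r₁) (hr₂ : 0 < r₂)
    (ha : 0 < a) (hb : 1 < b) (hs : 0 < s) (hab : a * b < 1)
    (J₁ J₂ α : ℝ → ℝ)
    (hJ₁ : KernelGood J₁) (hJ₂ : KernelGood J₂) (hα : AlphaGood α)
    (φ ψ : ℝ → ℝ)
    (htws : IsTWS d₁ d₂ r₁ r₂ a b s J₁ J₂ α φ ψ)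
    (hφ : ∀ z, 0 ≤ φ z ∧ φ z ≤ 1) (hψ : ∀ z, 0 ≤ ψ z ∧ ψ z ≤ b - 1)
    (hlifφ : 1 - a * (b - 1) ≤ Filter.liminf φ atBot)
    (hlifψ : (b - 1) * (1 - a * b) ≤ Filter.liminf ψ atBot) :
    Tendsto φ atBot (nhds ((1 + a) / (1 + a * b))) ∧
      Tendsto ψ atBot (nhds ((b - 1) / (1 + a * b))) := by
  obtain ⟨hφC, hψC, -, -, heqφ, heqψ⟩ := htws
  obtain ⟨hJ₁c, hJ₁0, hJ₁cs, hJ₁1, -⟩ := hJ₁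
  obtain ⟨hJ₂c, hJ₂0, hJ₂cs, hJ₂1, -⟩ := hJ₂
  have hφcont : Continuous φ := hφC.continuous
  have hψcont : Continuous ψ := hψC.continuous
  have hφdiff : Differentiable ℝ φ := hφC.differentiable one_ne_zero
  have hψdiff : Differentiable ℝ ψ := hψC.differentiable one_ne_zero
  have hφIcc : ∀ z, φ z ∈ Set.Icc (0 : ℝ) 1 := fun z => ⟨(hφ z).1, (hφ z).2⟩
  have hψIcc : ∀ z, ψ z ∈ Set.Icc (0 : ℝ) (b - 1) := fun z => ⟨(hψ z).1, (hψ z).2⟩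
  have hφle : IsBoundedUnder (· ≤ ·) atBot φ := Filter.isBoundedUnder_of ⟨1, fun z => (hφ z).2⟩
  have hφge : IsBoundedUnder (· ≥ ·) atBot φ := Filter.isBoundedUnder_of ⟨0, fun z => (hφ z).1⟩
  have hψle : IsBoundedUnder (· ≤ ·) atBot ψ :=
    Filter.isBoundedUnder_of ⟨b - 1, fun z => (hψ z).2⟩
  have hψge : IsBoundedUnder (· ≥ ·) atBot ψ := Filter.isBoundedUnder_of ⟨0, fun z => (hψ z).1⟩
  set A := liminf φ atBot with hA
  set B := limsup φ atBot with hB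
  set C := liminf ψ atBot with hC
  set D := limsup ψ atBot with hD
  have hAB : A ≤ B := liminf_le_limsup hφle hφge
  have hCD : C ≤ D := liminf_le_limsup hψle hψge
  have hApos : 0 < A := lt_of_lt_of_le (by nlinarith) hlifφ
  have hCpos : 0 < C :=
    lt_of_lt_of_le (mul_pos (by linarith) (by linarith)) hlifψ
  have hBpos : 0 < B := lt_of_lt_of_le hApos hAB
  have hDpos : 0 < D := lt_of_lt_of_le hCpos hCD
  have hαtend : Tendsto (fun z => α (-z)) atBot (𝓝 1) := hα.2.2.2.comp tendsto_neg_atBot_atTop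
  have heqφ' : ∀ z, s * deriv φ z =
      d₁ * ((∫ y : ℝ, J₁ (z - y) * φ y) - φ z) +
        r₁ * φ z * ((fun z => α (-z)) z + (-a) * ψ z - φ z) := by
    intro z; rw [heqφ z]; ring
  have heqψ' : ∀ z, s * deriv ψ z =
      d₂ * ((∫ y : ℝ, J₂ (z - y) * ψ y) - ψ z) +
        r₂ * ψ z * ((fun _ => (-1 : ℝ)) z + b * φ z - ψ z) := by
    intro z; rw [heqψ z]
  -- (1) limsup of φ
  have hineq1 : B + a * C ≤ 1 := by
    obtain ⟨w₁, hw₁, hw₁f, hw₁d⟩ := seq_limsup_deriv φ hφdiff hφle hφge.isCoboundedUnder_le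
    obtain ⟨p₁, v₁, -, hp₁, hv₁, -, hrel₁⟩ := tail_relation d₁ r₁ s (-a) 1 hd₁
      J₁ (fun z => α (-z)) φ ψ hJ₁c hJ₁0 hJ₁cs hJ₁1 hφcont hψcont 1 (b - 1)
      hφIcc hψIcc hαtend heqφ' w₁ hw₁ B hw₁f hw₁d
    have h0 : 0 ≤ d₁ * (B - p₁) := mul_nonneg hd₁.le (by linarith)
    have h1 : 0 ≤ r₁ * B * (1 + (-a) * v₁ - B) := by linarith
    have h2 : 0 ≤ 1 + (-a) * v₁ - B := by
      by_contra h
      push_neg at h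
      have := mul_neg_of_pos_of_neg (mul_pos hr₁ hBpos) h
      linarith
    have h3 : a * C ≤ a * v₁ := mul_le_mul_of_nonneg_left hv₁ ha.le
    linarith
  -- (2) liminf of φ
  have hineq2 : 1 ≤ A + a * D := by
    obtain ⟨w₂, hw₂, hw₂f, hw₂d⟩ := seq_liminf_deriv φ hφdiff hφge hφle.isCoboundedUnder_ge
    obtain ⟨p₂, v₂, hp₂, -, -, hv₂, hrel₂⟩ := tail_relation d₁ r₁ s (-a) 1 hd₁
      J₁ (fun z => α (-z)) φ ψ hJ₁c hJ₁0 hJ₁cs hJ₁1 hφcont hψcont 1 (b - 1)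
      hφIcc hψIcc hαtend heqφ' w₂ hw₂ A hw₂f hw₂d
    have h0 : 0 ≤ d₁ * (p₂ - A) := mul_nonneg hd₁.le (by linarith)
    have h1 : r₁ * A * (1 + (-a) * v₂ - A) ≤ 0 := by linarith
    have h2 : 1 + (-a) * v₂ - A ≤ 0 := by
      by_contra h
      push_neg at h
      have := mul_pos (mul_pos hr₁ hApos) h
      linarith
    have h3 : a * v₂ ≤ a * D := mul_le_mul_of_nonneg_left hv₂ ha.le
    linarith
  -- (3) limsup of ψ
  have hineq3 : D + 1 ≤ b * B := by
    obtain ⟨w₃, hw₃, hw₃f, hw₃d⟩ := seq_limsup_deriv ψ hψdiff hψle hψge.isCoboundedUnder_le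
    obtain ⟨p₃, u₃, -, hp₃, -, hu₃, hrel₃⟩ := tail_relation d₂ r₂ s b (-1) hd₂
      J₂ (fun _ => (-1 : ℝ)) ψ φ hJ₂c hJ₂0 hJ₂cs hJ₂1 hψcont hφcont (b - 1) 1
      hψIcc hφIcc tendsto_const_nhds heqψ' w₃ hw₃ D hw₃f hw₃d
    have h0 : 0 ≤ d₂ * (D - p₃) := mul_nonneg hd₂.le (by linarith)
    have h1 : 0 ≤ r₂ * D * (-1 + b * u₃ - D) := by linarith
    have h2 : 0 ≤ -1 + b * u₃ - D := by
      by_contra h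
      push_neg at h
      have := mul_neg_of_pos_of_neg (mul_pos hr₂ hDpos) h
      linarith
    have h3 : b * u₃ ≤ b * B := mul_le_mul_of_nonneg_left hu₃ (by linarith)
    linarith
  -- (4) liminf of ψ
  have hineq4 : b * A ≤ C + 1 := by
    obtain ⟨w₄, hw₄, hw₄f, hw₄d⟩ := seq_liminf_deriv ψ hψdiff hψge hψle.isCoboundedUnder_ge
    obtain ⟨p₄, u₄, hp₄, -, hu₄, -, hrel₄⟩ := tail_relation d₂ r₂ s b (-1) hd₂
      J₂ (fun _ => (-1 : ℝ)) ψ φ hJ₂c hJ₂0 hJ₂cs hJ₂1 hψcont hφcont (b - 1) 1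
      hψIcc hφIcc tendsto_const_nhds heqψ' w₄ hw₄ C hw₄f hw₄d
    have h0 : 0 ≤ d₂ * (p₄ - C) := mul_nonneg hd₂.le (by linarith)
    have h1 : r₂ * C * (-1 + b * u₄ - C) ≤ 0 := by linarith
    have h2 : -1 + b * u₄ - C ≤ 0 := by
      by_contra h
      push_neg at h
      have := mul_pos (mul_pos hr₂ hCpos) h
      linarith
    have h3 : b * A ≤ b * u₄ := mul_le_mul_of_nonneg_left hu₄ (by linarith)
    linarith
  -- algebra: collapse the four inequalities
  have hBA : B = A := by
    by_contra hne
    have hlt : A < B := hAB.lt_of_ne fun h => hne h.symm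
    have hDC : D - C ≤ b * (B - A) := by linarith
    have h5 : B - A ≤ a * (D - C) := by linarith
    have h6 : a * (D - C) ≤ a * (b * (B - A)) := mul_le_mul_of_nonneg_left hDC ha.le
    have h8 : a * b * (B - A) < 1 * (B - A) := mul_lt_mul_of_pos_right hab (by linarith)
    nlinarith [h5, h6, h8]
  have hbB : b * B = b * A := by rw [hBA]
  have hDCeq : D = C := le_antisymm (by linarith) hCD
  have haD : a * D = a * C := by rw [hDCeq]
  have hCval : C = b * A - 1 := by linarith
  have hA1 : A + a * C = 1 := by linarith
  have h1ab : (0 : ℝ) < 1 + a * b := by nlinarith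
  have hA2 : A * (1 + a * b) = 1 + a := by linear_combination hA1 - a * hCval
  have hC2 : C * (1 + a * b) = b - 1 := by
    linear_combination (1 + a * b) * hCval + b * hA2
  have hAval : A = (1 + a) / (1 + a * b) := by
    rw [eq_div_iff (ne_of_gt h1ab)]; exact hA2
  have hCval' : C = (b - 1) / (1 + a * b) := by
    rw [eq_div_iff (ne_of_gt h1ab)]; exact hC2
  refine ⟨tendsto_of_liminf_eq_limsup ?_ ?_ hφle hφge,
    tendsto_of_liminf_eq_limsup ?_ ?_ hψle hψge⟩
  · exact hAval
  · rw [← hB, hBA]; exact hAval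
  · exact hCval'
  · rw [← hD, hDCeq]; exact hCval'
end

section
/- Extinction under fast climate change, nonlocal case (Theorem 4.1). Assume b > 1. Let u₀, v₀ be continuous with 0 ≤ u₀ ≤ 1, 0 ≤ v₀ ≤ b−1, both not identically zero and both compactly supported, and let (u, v) be a solution of the nonlocal Cauchy problem with these initial data. If s > s*, then sup_{x∈ℝ} u(x,t) → 0 as t → +∞; if s > s_*, then sup_{x∈ℝ} v(x,t) → 0 as t → +∞. -/
set_option maxHeartbeats 1000000


open MeasureTheory Filter Topology

noncomputable def minSpeed (d r : ℝ) (J : ℝ → ℝ) : ℝ :=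
  sInf {c : ℝ | ∃ l : ℝ, 0 < l ∧
    c = (d * ((∫ y : ℝ, J y * Real.exp (l * y)) - 1) + r) / l}

/-- A solution of the nonlocal Cauchy problem (pp) with initial data `(u₀, v₀)`:
bounded continuous on ℝ × [0,∞), satisfying the equations pointwise for t > 0,
with 0 ≤ u ≤ 1 and 0 ≤ v ≤ b-1. -/
def IsSolPP (d₁ d₂ r₁ r₂ a b s : ℝ) (J₁ J₂ α : ℝ → ℝ) (u₀ v₀ : ℝ → ℝ)
    (u v : ℝ → ℝ → ℝ) : Prop :=
  ContinuousOn (fun p : ℝ × ℝ => u p.1 p.2) (Set.univ ×ˢ Set.Ici (0:ℝ)) ∧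
  ContinuousOn (fun p : ℝ × ℝ => v p.1 p.2) (Set.univ ×ˢ Set.Ici (0:ℝ)) ∧
  (∀ x t : ℝ, 0 ≤ t → 0 ≤ u x t ∧ u x t ≤ 1) ∧
  (∀ x t : ℝ, 0 ≤ t → 0 ≤ v x t ∧ v x t ≤ b - 1) ∧
  (∀ x : ℝ, u x 0 = u₀ x) ∧ (∀ x : ℝ, v x 0 = v₀ x) ∧
  (∀ x t : ℝ, 0 < t → HasDerivAt (fun τ => u x τ)
    (d₁ * ((∫ y : ℝ, J₁ (x - y) * u y t) - u x t) +
      r₁ * u x t * (α (x - s * t) - u x t - a * v x t)) t) ∧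
  (∀ x t : ℝ, 0 < t → HasDerivAt (fun τ => v x τ)
    (d₂ * ((∫ y : ℝ, J₂ (x - y) * v y t) - v x t) +
      r₂ * v x t * (-1 + b * u x t - v x t)) t)


lemma kernel_radius {J : ℝ → ℝ} (h : HasCompactSupport J) :
    ∃ R : ℝ, 0 ≤ R ∧ ∀ y : ℝ, R < |y| → J y = 0 := by
  obtain ⟨r, hr⟩ := h.isBounded.subset_closedBall 0
  refine ⟨max r 0, le_max_right _ _, fun y hy => ?_⟩
  apply image_eq_zero_of_notMem_tsupport
  intro hmem
  have := hr hmem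
  rw [Metric.mem_closedBall, Real.dist_eq, sub_zero] at this
  have : |y| ≤ max r 0 := le_trans this (le_max_left _ _)
  linarith

lemma integrable_ker {J : ℝ → ℝ} (hJc : Continuous J) {R : ℝ} (hR : 0 ≤ R)
    (hJs : ∀ y : ℝ, R < |y| → J y = 0) {f : ℝ → ℝ} (hf : Continuous f) (x : ℝ) :
    Integrable (fun y => J (x - y) * f y) := by
  apply Continuous.integrable_of_hasCompactSupport
  · exact (hJc.comp (continuous_const.sub continuous_id)).mul hf
  · apply HasCompactSupport.intro (isCompact_Icc (a := x - R) (b := x + R))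
    intro y hy
    have : R < |x - y| := by
      simp only [Set.mem_Icc, not_and_or, not_le] at hy
      rcases hy with h | h
      · rw [abs_of_pos (by linarith)]; linarith
      · rw [abs_of_neg (by linarith)]; linarith
    simp [hJs _ this]

lemma integral_ker_one {J : ℝ → ℝ} (hJint : (∫ y : ℝ, J y) = 1) (x : ℝ) :
    (∫ y : ℝ, J (x - y)) = 1 := by
  rw [integral_sub_left_eq_self J volume x, hJint]


-- moment shift: ∫ J(x-y) e^{-l(y-c')} dy = M(l) e^{-l(x-c')}
lemma ker_moment {J : ℝ → ℝ} (l x c' : ℝ) :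
    (∫ y : ℝ, J (x - y) * Real.exp (-(l * (y - c')))) =
      (∫ y : ℝ, J y * Real.exp (l * y)) * Real.exp (-(l * (x - c'))) := by
  have h := integral_sub_left_eq_self (fun z => J z * Real.exp (-(l * (x - z - c')))) volume x
  simp only [sub_sub_cancel] at h
  rw [h]
  have : ∀ z : ℝ, J z * Real.exp (-(l * (x - z - c'))) =
      (J z * Real.exp (l * z)) * Real.exp (-(l * (x - c'))) := by
    intro z
    rw [mul_assoc, ← Real.exp_add]
    ring_nf
  simp_rw [this]
  rw [integral_mul_const]

lemma moment_ge_one {J : ℝ → ℝ} (hJc : Continuous J) {R : ℝ} (hR : 0 ≤ R)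
    (hJs : ∀ y : ℝ, R < |y| → J y = 0) (hJ0 : ∀ y, 0 ≤ J y)
    (hJint : (∫ y : ℝ, J y) = 1) (hJe : ∀ y, J (-y) = J y) (l : ℝ) :
    1 ≤ ∫ y : ℝ, J y * Real.exp (l * y) := by
  have hint : ∀ m : ℝ, Integrable (fun y => J y * Real.exp (m * y)) := by
    intro m
    apply Continuous.integrable_of_hasCompactSupport
    · exact hJc.mul (Real.continuous_exp.comp (continuous_const.mul continuous_id))
    · apply HasCompactSupport.intro (isCompact_Icc (a := -R) (b := R))
      intro y hy
      have : R < |y| := by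
        simp only [Set.mem_Icc, not_and_or, not_le] at hy
        rcases hy with h | h
        · rw [abs_of_neg (by linarith)]; linarith
        · rw [abs_of_pos (by linarith)]; linarith
      simp [hJs _ this]
  have hsym : (∫ y : ℝ, J y * Real.exp (l * y)) = ∫ y : ℝ, J y * Real.exp (-(l * y)) := by
    have h := integral_neg_eq_self (fun y => J y * Real.exp (-(l * y))) volume
    simp only [neg_neg, mul_neg] at h
    rw [← h]
    congr 1; funext y
    rw [hJe y]
  have key : (2:ℝ) ≤ (∫ y : ℝ, J y * Real.exp (l * y)) + ∫ y : ℝ, J y * Real.exp (-(l * y)) := by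
    rw [← integral_add (hint l) (by simpa [mul_neg] using hint (-l))]
    have h2 : (2:ℝ) = ∫ y : ℝ, 2 * J y := by rw [integral_const_mul, hJint]; ring
    rw [h2]
    apply integral_mono
    · simpa using (hint 0).const_mul 2
    · exact (hint l).add (by simpa [mul_neg] using hint (-l))
    · intro y
      have hexp : (2:ℝ) ≤ Real.exp (l * y) + Real.exp (-(l * y)) := by
        have h1 := Real.add_one_le_exp (l * y)
        have h2 := Real.add_one_le_exp (-(l * y))
        linarith
      have := mul_le_mul_of_nonneg_left hexp (hJ0 y)
      simp only [Pi.add_apply]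
      nlinarith [hJ0 y]
  rw [hsym]
  rw [hsym] at key
  linarith

lemma speed_extract {d r s : ℝ} (hd : 0 < d) (hr : 0 < r) {J : ℝ → ℝ}
    (hM1 : ∀ l : ℝ, 1 ≤ ∫ y : ℝ, J y * Real.exp (l * y))
    (hlt : minSpeed d r J < s) :
    ∃ l c : ℝ, 0 < l ∧ 0 ≤ c ∧ c < s ∧
      d * ((∫ y : ℝ, J y * Real.exp (l * y)) - 1) + r = l * c := by
  set S := {c : ℝ | ∃ l : ℝ, 0 < l ∧
    c = (d * ((∫ y : ℝ, J y * Real.exp (l * y)) - 1) + r) / l} with hS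
  have hne : S.Nonempty := ⟨_, 1, one_pos, rfl⟩
  have hbdd : BddBelow S := by
    refine ⟨0, fun c hc => ?_⟩
    obtain ⟨l, hl, rfl⟩ := hc
    apply div_nonneg _ hl.le
    have := hM1 l
    nlinarith
  rw [minSpeed, ← hS] at hlt
  obtain ⟨c, hcS, hcs⟩ := (csInf_lt_iff hbdd hne).mp hlt
  obtain ⟨l, hl, hceq⟩ := hcS
  refine ⟨l, c, hl, ?_, hcs, ?_⟩
  · rw [hceq]; apply div_nonneg _ hl.le
    have := hM1 l; nlinarith
  · rw [hceq]; field_simp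

/-- comparison with the moving exponential supersolution -/
lemma front_comparison
    (d r lam c A W : ℝ) (J : ℝ → ℝ) (R : ℝ)
    (hd : 0 < d) (hlam : 0 < lam) (hA : 0 < A) (hW : 0 ≤ W)
    (hJc : Continuous J) (hR : 0 ≤ R) (hJs : ∀ y, R < |y| → J y = 0)
    (hJ0 : ∀ y, 0 ≤ J y) (hJint : (∫ y : ℝ, J y) = 1)
    (hc : d * ((∫ y : ℝ, J y * Real.exp (lam * y)) - 1) + r = lam * c)
    (u : ℝ → ℝ → ℝ)
    (hub : ∀ x t, 0 ≤ t → 0 ≤ u x t ∧ u x t ≤ W)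
    (hct : ∀ x, ContinuousOn (fun τ => u x τ) (Set.Ici 0))
    (hcx : ∀ t, 0 < t → Continuous (fun x => u x t))
    (hinit : ∀ x, u x 0 ≤ A * Real.exp (-(lam * x)))
    (hder : ∀ x t, 0 < t → ∃ g, HasDerivAt (fun τ => u x τ) g t ∧
        g ≤ d * ((∫ y : ℝ, J (x - y) * u y t) - u x t) + r * u x t) :
    ∀ x t, 0 ≤ t → u x t ≤ A * Real.exp (-(lam * (x - c * t))) := by
  set Mo := ∫ y : ℝ, J y * Real.exp (lam * y) with hMo
  set φ : ℝ → ℝ → ℝ := fun x t => A * Real.exp (-(lam * (x - c * t))) with hφdef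
  set z : ℝ → ℝ → ℝ := fun x t => Real.exp ((d - r) * t) * (φ x t - u x t) with hzdef
  set δ : ℝ := 1 / (2 * d) with hδdef
  have hδ : 0 < δ := by positivity
  have hφpos : ∀ x t, 0 < φ x t := fun x t => by positivity
  have hφcont : ∀ x, Continuous (fun τ => φ x τ) := by
    intro x
    exact continuous_const.mul (Real.continuous_exp.comp
      ((continuous_const.mul (continuous_const.sub (continuous_const.mul continuous_id))).neg))
  have hφcontx : ∀ t, Continuous (fun x => φ x t) := by
    intro t
    exact continuous_const.mul (Real.continuous_exp.comp
      ((continuous_const.mul (continuous_id.sub continuous_const)).neg))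
  have hφder : ∀ x t, HasDerivAt (fun τ => φ x τ) (lam * c * φ x t) t := by
    intro x t
    have h1 : HasDerivAt (fun τ : ℝ => -(lam * (x - c * τ))) (lam * c) t := by
      have h0 : HasDerivAt (fun τ : ℝ => x - c * τ) (-c) t := by
        simpa using ((hasDerivAt_id t).const_mul c).const_sub x
      have h3 := (h0.const_mul lam).neg
      simp only [mul_neg, neg_neg] at h3
      exact h3
    have h2 := (h1.exp).const_mul A
    refine h2.congr_deriv ?_
    show A * (Real.exp (-(lam * (x - c * t))) * (lam * c)) = lam * c * (A * Real.exp (-(lam * (x - c * t)))); ring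
    -- * c * (A * Real.exp (-(lam * (x - c * t)))) = _; ring
  have hφker : ∀ x t, (∫ y : ℝ, J (x - y) * φ y t) = Mo * φ x t := by
    intro x t
    have : (fun y => J (x - y) * φ y t)
        = fun y => A * (J (x - y) * Real.exp (-(lam * (y - c * t)))) := by
      funext y; simp only [hφdef]; ring
    rw [this, integral_const_mul, ker_moment]
    simp only [hφdef, hMo]; ring
  -- z lower derivative bound
  have hzder : ∀ x t, 0 < t → ∃ gz, HasDerivAt (fun τ => z x τ) gz t ∧
      d * (∫ y : ℝ, J (x - y) * z y t) ≤ gz := by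
    intro x t ht
    obtain ⟨g, hg, hgle⟩ := hder x t ht
    refine ⟨(d - r) * Real.exp ((d - r) * t) * (φ x t - u x t)
        + Real.exp ((d - r) * t) * (lam * c * φ x t - g), ?_, ?_⟩
    · have he : HasDerivAt (fun τ : ℝ => Real.exp ((d - r) * τ))
          ((d - r) * Real.exp ((d - r) * t)) t := by
        simpa [mul_comm] using ((hasDerivAt_id t).const_mul (d - r)).exp
      have hw : HasDerivAt (fun τ => φ x τ - u x τ) (lam * c * φ x t - g) t :=
        (hφder x t).sub hg
      exact he.mul hw
    · have hIu : Integrable (fun y => J (x - y) * u y t) :=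
        integrable_ker hJc hR hJs (hcx t ht) x
      have hIφ : Integrable (fun y => J (x - y) * φ y t) :=
        integrable_ker hJc hR hJs (hφcontx t) x
      have hzsplit : (∫ y : ℝ, J (x - y) * z y t)
          = Real.exp ((d - r) * t) * ((∫ y : ℝ, J (x - y) * φ y t)
            - ∫ y : ℝ, J (x - y) * u y t) := by
        rw [← integral_sub hIφ hIu, ← integral_const_mul]
        congr 1; funext y; simp only [hzdef]; ring
      rw [hzsplit, hφker]
      have hE : 0 < Real.exp ((d - r) * t) := Real.exp_pos _
      have h1 : Real.exp ((d - r) * t) * g ≤ Real.exp ((d - r) * t) *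
          (d * ((∫ y : ℝ, J (x - y) * u y t) - u x t) + r * u x t) :=
        mul_le_mul_of_nonneg_left hgle hE.le
      have h2 : (d * (Mo - 1) + r) * (Real.exp ((d - r) * t) * φ x t)
          = lam * c * (Real.exp ((d - r) * t) * φ x t) := by rw [hc]
      nlinarith [h1, h2]
  -- slab induction
  have main : ∀ k : ℕ, ∀ x t, t ∈ Set.Icc 0 ((k : ℝ) * δ) → 0 ≤ z x t := by
    intro k
    induction k with
    | zero =>
      intro x t ht
      simp only [Nat.cast_zero, zero_mul, Set.Icc_self, Set.mem_singleton_iff] at ht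
      subst ht
      have := hinit x
      have : u x 0 ≤ φ x 0 := by simpa [hφdef] using this
      simp only [hzdef]
      exact mul_nonneg (Real.exp_pos _).le (by linarith)
    | succ k ih =>
      intro x t ht
      set T₀ : ℝ := (k : ℝ) * δ with hT₀
      set T₁ : ℝ := ((k : ℝ) + 1) * δ with hT₁
      have hT₀0 : 0 ≤ T₀ := mul_nonneg (Nat.cast_nonneg k) hδ.le
      have hdiff : T₁ - T₀ = δ := by rw [hT₀, hT₁]; ring
      have hTlt : T₀ < T₁ := by linarith
      have hT₁0 : 0 ≤ T₁ := by linarith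
      have ht2 : t ≤ T₁ := by
        rw [hT₁]
        have := ht.2
        push_cast at this
        linarith
      rcases le_or_gt t T₀ with hle | hgt
      · exact ih x t ⟨ht.1, hle⟩
      -- slab [T₀, T₁]
      set Mset : Set ℝ :=
        (fun p : ℝ × ℝ => max 0 (-(z p.1 p.2))) '' (Set.univ ×ˢ Set.Icc T₀ T₁) with hMset
      have hMne : Mset.Nonempty :=
        ⟨_, ⟨(0, T₀), ⟨Set.mem_univ _, Set.mem_Icc.mpr ⟨le_refl _, hTlt.le⟩⟩, rfl⟩⟩
      have hMbdd : BddAbove Mset := by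
        refine ⟨Real.exp (|d - r| * T₁) * W, fun m hm => ?_⟩
        obtain ⟨⟨y, τ⟩, ⟨_, hτ⟩, rfl⟩ := hm
        simp only [Set.mem_Icc] at hτ
        have hτ0 : 0 ≤ τ := le_trans hT₀0 hτ.1
        have hbd := hub y τ hτ0
        have hφp := hφpos y τ
        have h1 : -(z y τ) ≤ Real.exp ((d - r) * τ) * W := by
          simp only [hzdef]
          nlinarith [Real.exp_pos ((d - r) * τ)]
        have h2 : Real.exp ((d - r) * τ) ≤ Real.exp (|d - r| * T₁) := by
          apply Real.exp_le_exp.mpr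
          calc (d - r) * τ ≤ |d - r| * τ :=
                mul_le_mul_of_nonneg_right (le_abs_self _) hτ0
            _ ≤ |d - r| * T₁ := mul_le_mul_of_nonneg_left hτ.2 (abs_nonneg _)
        have h3 : Real.exp ((d - r) * τ) * W ≤ Real.exp (|d - r| * T₁) * W :=
          mul_le_mul_of_nonneg_right h2 hW
        have : 0 ≤ Real.exp (|d - r| * T₁) * W := by positivity
        exact max_le this (le_trans h1 h3)
      set M : ℝ := sSup Mset with hM
      have hMub : ∀ y τ, τ ∈ Set.Icc T₀ T₁ → -(z y τ) ≤ M := by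
        intro y τ hτ
        exact le_trans (le_max_right _ _)
          (le_csSup hMbdd ⟨(y, τ), ⟨Set.mem_univ _, hτ⟩, rfl⟩)
      have hM0 : 0 ≤ M :=
        le_trans (le_max_left _ _)
          (le_csSup hMbdd ⟨(0, T₀), ⟨Set.mem_univ _, Set.mem_Icc.mpr ⟨le_refl _, hTlt.le⟩⟩, rfl⟩)
      -- lower bound on z in the slab
      have hzlow : ∀ y τ, τ ∈ Set.Icc T₀ T₁ → z y T₀ - d * M * (τ - T₀) ≤ z y τ := by
        intro y τ hτ
        have hmono : MonotoneOn (fun σ => z y σ + d * M * σ) (Set.Icc T₀ T₁) := by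
          apply monotoneOn_of_deriv_nonneg (convex_Icc T₀ T₁)
          · refine ContinuousOn.add ?_ ((continuous_const.mul continuous_id).continuousOn)
            refine ContinuousOn.mul
              ((Real.continuous_exp.comp (continuous_const.mul continuous_id)).continuousOn) ?_
            apply ContinuousOn.sub ((hφcont y).continuousOn)
            exact (hct y).mono (fun σ hσ => le_trans hT₀0 hσ.1)
          · intro σ hσ
            rw [interior_Icc] at hσ
            have hσ0 : 0 < σ := lt_of_le_of_lt hT₀0 hσ.1
            obtain ⟨gz, hgz, _⟩ := hzder y σ hσ0
            have hd' : HasDerivAt (fun σ => z y σ + d * M * σ) (gz + d * M) σ := by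
              have h := hgz.add ((hasDerivAt_id σ).const_mul (d * M))
              simp only [mul_one] at h
              exact h
            exact hd'.differentiableAt.differentiableWithinAt
          · intro σ hσ
            rw [interior_Icc] at hσ
            have hσ0 : 0 < σ := lt_of_le_of_lt hT₀0 hσ.1
            obtain ⟨gz, hgz, hgzle⟩ := hzder y σ hσ0
            have hd' : HasDerivAt (fun σ => z y σ + d * M * σ) (gz + d * M) σ := by
              have h := hgz.add ((hasDerivAt_id σ).const_mul (d * M))
              simp only [mul_one] at h
              exact h
            rw [hd'.deriv]
            -- gz ≥ d * ∫ J z ≥ -d M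
            have hker : -(M) ≤ ∫ y' : ℝ, J (y - y') * z y' σ := by
              have hIz : Integrable (fun y' => J (y - y') * z y' σ) := by
                apply integrable_ker hJc hR hJs _ y
                exact (continuous_const.mul ((hφcontx σ).sub (hcx σ hσ0)))
              have hIc : Integrable (fun y' => -(J (y - y') * M)) := by
                apply Integrable.neg
                simpa using (integrable_ker hJc hR hJs continuous_const y (f := fun _ => M))
              have hpt : ∀ y', -(J (y - y') * M) ≤ J (y - y') * z y' σ := by
                intro y'
                have hJn := hJ0 (y - y')
                have hzl : -(z y' σ) ≤ M := hMub y' σ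
                  (Set.mem_Icc.mpr ⟨hσ.1.le, hσ.2.le⟩)
                nlinarith
              have hmono := integral_mono hIc hIz hpt
              have hcM : (∫ y' : ℝ, J (y - y') * M) = M := by
                rw [integral_mul_const, integral_ker_one hJint, one_mul]
              calc -(M) = ∫ y' : ℝ, -(J (y - y') * M) := by rw [integral_neg, hcM]
                _ ≤ _ := hmono
            nlinarith [hgzle, hker, hd.le]
        have h1 := hmono (Set.mem_Icc.mpr ⟨le_refl _, hTlt.le⟩) hτ hτ.1
        simp only at h1
        linarith
      -- conclude M = 0
      have hMhalf : M ≤ d * M * δ := by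
        apply csSup_le hMne
        intro m hm
        obtain ⟨⟨y, τ⟩, ⟨_, hτ⟩, rfl⟩ := hm
        have hz0 : 0 ≤ z y T₀ := ih y T₀ (Set.mem_Icc.mpr ⟨hT₀0, le_refl _⟩)
        have hlow := hzlow y τ hτ
        have hτd : τ - T₀ ≤ δ := by
          simp only [Set.mem_Icc] at hτ
          linarith [hτ.2]
        have hmm : d * M * (τ - T₀) ≤ d * M * δ :=
          mul_le_mul_of_nonneg_left hτd (mul_nonneg hd.le hM0)
        have : -(z y τ) ≤ d * M * δ := by linarith
        have hdMδ : 0 ≤ d * M * δ := by positivity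
        exact max_le hdMδ this
      have hMzero : M = 0 := by
        have : d * δ = 1 / 2 := by
          rw [hδdef]; field_simp
        nlinarith
      -- conclude on slab
      have := hMub x t (Set.mem_Icc.mpr ⟨hgt.le, ht2⟩)
      rw [hMzero] at this
      linarith
  -- wrap up
  intro x t ht
  obtain ⟨k, hk⟩ := exists_nat_ge (t / δ)
  have htk : t ≤ (k : ℝ) * δ := by
    rw [div_le_iff₀ hδ] at hk; linarith
  have hz := main k x t (Set.mem_Icc.mpr ⟨ht, htk⟩)
  simp only [hzdef] at hz
  have hE := Real.exp_pos ((d - r) * t)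
  have : 0 ≤ φ x t - u x t := by nlinarith
  simpa [hφdef] using this

/-- decay of `u` in the moving hostile region -/
lemma hostile_decay
    (d κ s' m₀ W T₁ : ℝ) (J : ℝ → ℝ) (R : ℝ)
    (hd : 0 < d) (hκ : 0 < κ) (hs' : 0 ≤ s') (hT₁ : 1 ≤ T₁) (hW : 0 ≤ W)
    (hJc : Continuous J) (hR : 0 ≤ R) (hJs : ∀ y, R < |y| → J y = 0)
    (hJ0 : ∀ y, 0 ≤ J y) (hJint : (∫ y : ℝ, J y) = 1)
    (u : ℝ → ℝ → ℝ)
    (hub : ∀ x t, 0 ≤ t → 0 ≤ u x t ∧ u x t ≤ W)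
    (hct : ∀ x, ContinuousOn (fun τ => u x τ) (Set.Ici 0))
    (hcx : ∀ t, 0 < t → Continuous (fun x => u x t))
    (hder : ∀ x t, T₁ ≤ t → x ≤ s' * t - m₀ → ∃ g, HasDerivAt (fun τ => u x τ) g t ∧
        g ≤ d * ((∫ y : ℝ, J (x - y) * u y t) - u x t) - κ * u x t) :
    ∀ ε : ℝ, 0 < ε → ∃ D T : ℝ, ∀ t, T ≤ t → ∀ x, x ≤ s' * t - D → u x t ≤ ε := by
  intro ε hε
  set μ : ℝ := d + κ with hμdef
  have hμ : 0 < μ := by positivity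
  set q : ℝ := d / μ with hqdef
  have hq0 : 0 < q := by positivity
  have hq1 : q < 1 := by
    rw [hqdef, div_lt_one hμ]; simp only [hμdef]; linarith
  have hμq : μ * q = d := by
    rw [hqdef]; field_simp
  -- choose the waiting time S
  set η : ℝ := ε * (1 - q) / (2 * (W + 1)) with hηdef
  have hη : 0 < η := by
    apply div_pos (by nlinarith) (by nlinarith)
  set S : ℝ := |Real.log η| / μ with hSdef
  have hS0 : 0 ≤ S := div_nonneg (abs_nonneg _) hμ.le
  have hexpS : Real.exp (-(μ * S)) ≤ η := by
    have h1 : -(μ * S) ≤ Real.log η := by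
      have h2 : μ * S = |Real.log η| := by
        rw [hSdef]; field_simp
      rw [h2]; exact neg_abs_le _
    calc Real.exp (-(μ * S)) ≤ Real.exp (Real.log η) := Real.exp_le_exp.mpr h1
      _ = η := Real.exp_log hη
  set E : ℝ := Real.exp (-(μ * S)) * W with hEdef
  have hE0 : 0 ≤ E := mul_nonneg (Real.exp_pos _).le hW
  have hEsmall : E / (1 - q) ≤ ε / 2 := by
    rw [div_le_iff₀ (by linarith)]
    have h1 : E ≤ η * W := mul_le_mul_of_nonneg_right hexpS hW
    have h2 : η * W ≤ ε * (1 - q) / 2 := by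
      rw [hηdef]
      rw [div_mul_eq_mul_div, div_le_div_iff₀ (by nlinarith) (by norm_num)]
      nlinarith
    calc E ≤ ε * (1 - q) / 2 := le_trans h1 h2
      _ = ε / 2 * (1 - q) := by ring
  set C : ℕ → ℝ := fun n => q ^ n * W + E / (1 - q) with hCdef
  have hC0 : ∀ n, 0 ≤ C n := by
    intro n
    apply add_nonneg (mul_nonneg (pow_nonneg hq0.le n) hW)
    exact div_nonneg hE0 (by linarith)
  have hCstep : ∀ n, q * C n + E = C (n + 1) := by
    intro n
    show q * (q ^ n * W + E / (1 - q)) + E = q ^ (n + 1) * W + E / (1 - q)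
    have h1q : (1:ℝ) - q ≠ 0 := ne_of_gt (by linarith)
    field_simp
    ring
  set R' : ℝ := s' * S + R with hR'def
  have hR'0 : 0 ≤ R' := by positivity
  -- main induction
  have main : ∀ n : ℕ, ∀ t, T₁ + n * S ≤ t →
      ∀ x, x ≤ s' * t - m₀ - n * R' → u x t ≤ C n := by
    intro n
    induction n with
    | zero =>
      intro t ht x _
      have ht0 : 0 ≤ t := by
        simp only [Nat.cast_zero, zero_mul, add_zero] at ht
        linarith
      have := (hub x t ht0).2
      simp only [hCdef, pow_zero, one_mul]
      have : 0 ≤ E / (1 - q) := div_nonneg hE0 (by linarith)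
      linarith [(hub x t ht0).2]
    | succ n ih =>
      intro t ht x hx
      push_cast at ht hx
      set T' : ℝ := t - S with hT'def
      have hT'ge : T₁ + n * S ≤ T' := by rw [hT'def]; linarith
      have hT'pos : 0 < T' := by
        have : (0:ℝ) ≤ n * S := by positivity
        linarith
      have hT't : T' ≤ t := by rw [hT'def]; linarith
      -- hostility along the segment
      have hhost : ∀ τ, τ ∈ Set.Icc T' t → T₁ ≤ τ ∧ x ≤ s' * τ - m₀ := by
        intro τ hτ
        constructor
        · have : (0:ℝ) ≤ n * S := by positivity
          linarith [hτ.1]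
        · have h1 : s' * T' ≤ s' * τ := mul_le_mul_of_nonneg_left hτ.1 hs'
          have h2 : x ≤ s' * T' - m₀ := by
            have : ((n:ℝ) + 1) * R' ≥ s' * S := by nlinarith [pow_nonneg hq0.le n]
            have hsT' : s' * T' = s' * t - s' * S := by rw [hT'def]; ring
            nlinarith
          linarith
      -- neighbour bound
      have hnb : ∀ τ, τ ∈ Set.Icc T' t → (∫ y : ℝ, J (x - y) * u y τ) ≤ C n := by
        intro τ hτ
        have hτpos : 0 < τ := lt_of_lt_of_le hT'pos hτ.1
        have hptw : ∀ y : ℝ, J (x - y) * u y τ ≤ J (x - y) * C n := by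
          intro y
          rcases le_or_gt |x - y| R with hy | hy
          · have hyr : y ≤ x + R := by
              rcases abs_le.mp hy with ⟨h1, h2⟩; linarith
            have hyn : y ≤ s' * τ - m₀ - n * R' := by
              have h1 : s' * T' ≤ s' * τ := mul_le_mul_of_nonneg_left hτ.1 hs'
              have hsT' : s' * T' = s' * t - s' * S := by rw [hT'def]; ring
              have : ((n:ℝ) + 1) * R' = n * R' + s' * S + R := by rw [hR'def]; ring
              nlinarith
            have := ih τ (le_trans hT'ge hτ.1) y hyn
            exact mul_le_mul_of_nonneg_left this (hJ0 _)
          · rw [hJs _ hy]; simp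
        have hIu : Integrable (fun y => J (x - y) * u y τ) :=
          integrable_ker hJc hR hJs (hcx τ hτpos) x
        have hIc : Integrable (fun y => J (x - y) * C n) := by
          simpa using (integrable_ker hJc hR hJs (continuous_const (y := C n)) x)
        calc (∫ y : ℝ, J (x - y) * u y τ) ≤ ∫ y : ℝ, J (x - y) * C n :=
              integral_mono hIu hIc hptw
          _ = C n := by rw [integral_mul_const, integral_ker_one hJint, one_mul]
      -- antitone functional
      have hanti : AntitoneOn (fun τ => (u x τ - q * C n) * Real.exp (μ * τ))
          (Set.Icc T' t) := by
        apply antitoneOn_of_deriv_nonpos (convex_Icc T' t)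
        · apply ContinuousOn.mul
          · exact ((hct x).mono (fun τ hτ => le_trans hT'pos.le hτ.1)).sub continuousOn_const
          · exact (Real.continuous_exp.comp (continuous_const.mul continuous_id)).continuousOn
        · intro σ hσ
          rw [interior_Icc] at hσ
          obtain ⟨hh1, hh2⟩ := hhost σ ⟨hσ.1.le, hσ.2.le⟩
          obtain ⟨g, hg, _⟩ := hder x σ hh1 hh2
          have hex : HasDerivAt (fun τ : ℝ => Real.exp (μ * τ)) (Real.exp (μ * σ) * μ) σ := by
            simpa [mul_comm] using ((hasDerivAt_id σ).const_mul μ).exp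
          exact (((hg.sub_const (q * C n)).mul hex)).differentiableAt.differentiableWithinAt
        · intro σ hσ
          rw [interior_Icc] at hσ
          obtain ⟨hh1, hh2⟩ := hhost σ ⟨hσ.1.le, hσ.2.le⟩
          obtain ⟨g, hg, hgle⟩ := hder x σ hh1 hh2
          have hex : HasDerivAt (fun τ : ℝ => Real.exp (μ * τ)) (Real.exp (μ * σ) * μ) σ := by
            simpa [mul_comm] using ((hasDerivAt_id σ).const_mul μ).exp
          have hF : HasDerivAt (fun τ => (u x τ - q * C n) * Real.exp (μ * τ))
              (g * Real.exp (μ * σ) + (u x σ - q * C n) * (Real.exp (μ * σ) * μ)) σ :=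
            (hg.sub_const (q * C n)).mul hex
          rw [hF.deriv]
          have hJb := hnb σ ⟨hσ.1.le, hσ.2.le⟩
          have hEp : 0 < Real.exp (μ * σ) := Real.exp_pos _
          have hσpos : 0 < σ := lt_of_lt_of_le hT'pos hσ.1.le
          have hg2 : g ≤ d * C n - μ * u x σ := by
            have h3 := (hub x σ hσpos.le).1
            have : d * (∫ y : ℝ, J (x - y) * u y σ) ≤ d * C n :=
              mul_le_mul_of_nonneg_left hJb hd.le
            simp only [hμdef]
            nlinarith
          have : g * Real.exp (μ * σ) + (u x σ - q * C n) * (Real.exp (μ * σ) * μ)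
              = (g + μ * u x σ - μ * q * C n) * Real.exp (μ * σ) := by ring
          rw [this]
          apply mul_nonpos_of_nonpos_of_nonneg _ hEp.le
          have h5 : μ * q * C n = d * C n := by rw [hμq]
          linarith [hg2, h5]
      -- use the antitone functional
      have hmemT' : T' ∈ Set.Icc T' t := Set.mem_Icc.mpr ⟨le_refl _, hT't⟩
      have hmemt : t ∈ Set.Icc T' t := Set.mem_Icc.mpr ⟨hT't, le_refl _⟩
      have hFt := hanti hmemT' hmemt hT't
      simp only at hFt
      have hF1 : (u x T' - q * C n) * Real.exp (μ * T') ≤ W * Real.exp (μ * T') := by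
        apply mul_le_mul_of_nonneg_right _ (Real.exp_pos _).le
        have := (hub x T' hT'pos.le).2
        have := mul_nonneg hq0.le (hC0 n)
        linarith
      have h6 : (u x t - q * C n) * Real.exp (μ * t) ≤ W * Real.exp (μ * T') :=
        le_trans hFt hF1
      have h7 : u x t - q * C n ≤ W * Real.exp (μ * T') / Real.exp (μ * t) := by
        rw [le_div_iff₀ (Real.exp_pos _)]; exact h6
      have h8 : W * Real.exp (μ * T') / Real.exp (μ * t) = E := by
        rw [hEdef, mul_comm (Real.exp (-(μ * S))) W, mul_div_assoc, ← Real.exp_sub]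
        congr 1
        rw [hT'def]; ring
      rw [h8] at h7
      have := hCstep n
      push_cast
      linarith
  -- conclusion
  obtain ⟨n, hn⟩ := exists_pow_lt_of_lt_one (show (0:ℝ) < ε / (2 * (W + 1)) by positivity) hq1
  have hqnW : q ^ n * W ≤ ε / 2 := by
    have h1 : q ^ n * W ≤ ε / (2 * (W + 1)) * W :=
      mul_le_mul_of_nonneg_right hn.le hW
    have h2 : ε / (2 * (W + 1)) * W ≤ ε / 2 := by
      rw [div_mul_eq_mul_div, div_le_div_iff₀ (by nlinarith) (by norm_num)]
      nlinarith
    linarith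
  refine ⟨m₀ + n * R', T₁ + n * S, fun t ht x hx => ?_⟩
  have := main n t ht x (by linarith)
  have hCn : C n ≤ ε := by
    show q ^ n * W + E / (1 - q) ≤ ε
    linarith [hEsmall]
  linarith


lemma slice_t {u : ℝ → ℝ → ℝ}
    (hc : ContinuousOn (fun p : ℝ × ℝ => u p.1 p.2) (Set.univ ×ˢ Set.Ici (0:ℝ)))
    (x : ℝ) : ContinuousOn (fun τ => u x τ) (Set.Ici (0:ℝ)) := by
  have h1 : ContinuousOn (fun τ : ℝ => ((x, τ) : ℝ × ℝ)) (Set.Ici (0:ℝ)) :=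
    (continuous_const.prodMk continuous_id).continuousOn
  exact hc.comp h1 (fun τ hτ => ⟨Set.mem_univ _, hτ⟩)

lemma slice_x {u : ℝ → ℝ → ℝ}
    (hc : ContinuousOn (fun p : ℝ × ℝ => u p.1 p.2) (Set.univ ×ˢ Set.Ici (0:ℝ)))
    {t : ℝ} (ht : 0 < t) : Continuous (fun x => u x t) := by
  rw [continuous_iff_continuousAt]
  intro x
  have hmem : (Set.univ ×ˢ Set.Ici (0:ℝ)) ∈ nhds ((x, t) : ℝ × ℝ) := by
    apply Filter.mem_of_superset
      ((isOpen_univ.prod isOpen_Ioi).mem_nhds ⟨Set.mem_univ _, Set.mem_Ioi.mpr ht⟩)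
    exact Set.prod_mono subset_rfl Set.Ioi_subset_Ici_self
  have hca : ContinuousAt (fun p : ℝ × ℝ => u p.1 p.2) (x, t) := hc.continuousAt hmem
  have h2 : ContinuousAt (fun y : ℝ => ((y, t) : ℝ × ℝ)) x :=
    (continuous_id.prodMk continuous_const).continuousAt
  have h3 : ContinuousAt ((fun p : ℝ × ℝ => u p.1 p.2) ∘ (fun y : ℝ => ((y, t) : ℝ × ℝ))) x :=
    ContinuousAt.comp (x := x) hca h2
  exact h3

lemma exp_decay_T (A b ε : ℝ) (hA : 0 < A) (hb : 0 < b) (hε : 0 < ε) :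
    ∃ T : ℝ, ∀ t, T ≤ t → A * Real.exp (-(b * t)) ≤ ε := by
  refine ⟨|Real.log (ε / A)| / b, fun t ht => ?_⟩
  have h1 : |Real.log (ε / A)| ≤ b * t := by
    rw [div_le_iff₀ hb] at ht; linarith
  have h2 : -(b * t) ≤ Real.log (ε / A) := by
    have := neg_abs_le (Real.log (ε / A)); linarith
  calc A * Real.exp (-(b * t)) ≤ A * Real.exp (Real.log (ε / A)) :=
        mul_le_mul_of_nonneg_left (Real.exp_le_exp.mpr h2) hA.le
    _ = A * (ε / A) := by rw [Real.exp_log (by positivity)]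
    _ = ε := by field_simp

/-- Theorem 4.1: extinction under fast climate change, nonlocal case. -/
theorem extinction_fast_climate_nonlocal
    (d₁ d₂ r₁ r₂ a b s : ℝ)
    (hd₁ : 0 < d₁) (hd₂ : 0 < d₂) (hr₁ : 0 < r₁) (hr₂ : 0 < r₂)
    (ha : 0 < a) (hb : 1 < b) (hs : 0 < s)
    (J₁ J₂ α : ℝ → ℝ)
    (hJ₁ : KernelGood J₁) (hJ₂ : KernelGood J₂) (hα : AlphaGood α)
    (u₀ v₀ : ℝ → ℝ)
    (hu₀c : Continuous u₀) (hu₀b : ∀ x, 0 ≤ u₀ x ∧ u₀ x ≤ 1)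
    (hu₀ne : ∃ x, u₀ x ≠ 0) (hu₀supp : HasCompactSupport u₀)
    (hv₀c : Continuous v₀) (hv₀b : ∀ x, 0 ≤ v₀ x ∧ v₀ x ≤ b - 1)
    (hv₀ne : ∃ x, v₀ x ≠ 0) (hv₀supp : HasCompactSupport v₀)
    (u v : ℝ → ℝ → ℝ)
    (hsol : IsSolPP d₁ d₂ r₁ r₂ a b s J₁ J₂ α u₀ v₀ u v) :
    (minSpeed d₁ r₁ J₁ < s →
      ∀ ε > (0:ℝ), ∃ T : ℝ, ∀ t ≥ T, ∀ x : ℝ, u x t ≤ ε) ∧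
    (minSpeed d₂ (r₂ * (b - 1)) J₂ < s →
      ∀ ε > (0:ℝ), ∃ T : ℝ, ∀ t ≥ T, ∀ x : ℝ, v x t ≤ ε) := by
  obtain ⟨hJ₁c, hJ₁0, hJ₁supp, hJ₁int, hJ₁even⟩ := hJ₁
  obtain ⟨hJ₂c, hJ₂0, hJ₂supp, hJ₂int, hJ₂even⟩ := hJ₂
  obtain ⟨hαc, hαmono, ⟨L, hL, hLtend⟩, hαtop⟩ := hα
  obtain ⟨hCu, hCv, hubd, hvbd, hu0, hv0, hpdeu, hpdev⟩ := hsol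
  obtain ⟨R₁, hR₁0, hJ₁s⟩ := kernel_radius hJ₁supp
  obtain ⟨R₂, hR₂0, hJ₂s⟩ := kernel_radius hJ₂supp
  have hM1₁ : ∀ l : ℝ, 1 ≤ ∫ y : ℝ, J₁ y * Real.exp (l * y) :=
    fun l => moment_ge_one hJ₁c hR₁0 hJ₁s hJ₁0 hJ₁int hJ₁even l
  have hM1₂ : ∀ l : ℝ, 1 ≤ ∫ y : ℝ, J₂ y * Real.exp (l * y) :=
    fun l => moment_ge_one hJ₂c hR₂0 hJ₂s hJ₂0 hJ₂int hJ₂even l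
  have hαle1 : ∀ z, α z ≤ 1 := fun z => hαmono.ge_of_tendsto hαtop z
  have hev : ∀ᶠ z in atBot, α z < L / 2 := hLtend.eventually_lt_const (by linarith)
  obtain ⟨z₀, hz₀⟩ := Filter.eventually_atBot.mp hev
  set m₀ : ℝ := -z₀ with hm₀def
  have hαhost : ∀ x t : ℝ, x ≤ s * t - m₀ → α (x - s * t) ≤ L / 2 := by
    intro x t hx
    exact (hz₀ _ (by rw [hm₀def] at hx; linarith)).le
  have hctu : ∀ x, ContinuousOn (fun τ => u x τ) (Set.Ici 0) := fun x => slice_t hCu x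
  have hcxu : ∀ t : ℝ, 0 < t → Continuous fun x => u x t := fun t ht => slice_x hCu ht
  have hctv : ∀ x, ContinuousOn (fun τ => v x τ) (Set.Ici 0) := fun x => slice_t hCv x
  have hcxv : ∀ t : ℝ, 0 < t → Continuous fun x => v x t := fun t ht => slice_x hCv ht
  set κ₁ : ℝ := r₁ * (-L / 2) with hκ₁def
  have hκ₁ : 0 < κ₁ := mul_pos hr₁ (by linarith)
  have hderu_host : ∀ x t : ℝ, (1:ℝ) ≤ t → x ≤ s * t - m₀ →
      ∃ g, HasDerivAt (fun τ => u x τ) g t ∧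
        g ≤ d₁ * ((∫ y : ℝ, J₁ (x - y) * u y t) - u x t) - κ₁ * u x t := by
    intro x t ht hx
    have ht0 : 0 < t := lt_of_lt_of_le one_pos ht
    refine ⟨_, hpdeu x t ht0, ?_⟩
    have hu := hubd x t ht0.le
    have hv := hvbd x t ht0.le
    have hα2 := hαhost x t hx
    have h1 : α (x - s * t) - u x t - a * v x t ≤ L / 2 := by
      nlinarith [mul_nonneg ha.le hv.1]
    have h2 : r₁ * u x t * (α (x - s * t) - u x t - a * v x t) ≤ r₁ * u x t * (L / 2) :=
      mul_le_mul_of_nonneg_left h1 (mul_nonneg hr₁.le hu.1)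
    have h3 : r₁ * u x t * (L / 2) = -(κ₁ * u x t) := by rw [hκ₁def]; ring
    linarith
  have hUdecay := hostile_decay d₁ κ₁ s m₀ 1 1 J₁ R₁ hd₁ hκ₁ hs.le (le_refl 1)
    (by norm_num) hJ₁c hR₁0 hJ₁s hJ₁0 hJ₁int u hubd hctu hcxu hderu_host
  constructor
  · -- extinction of u
    intro hms ε hε
    obtain ⟨lam₁, c₁, hlam₁, hc₁0, hc₁s, hceq₁⟩ := speed_extract hd₁ hr₁ hM1₁ hms
    obtain ⟨ρ₁, hρ₁0, hρ₁⟩ := kernel_radius hu₀supp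
    set A₁ : ℝ := Real.exp (lam₁ * ρ₁) with hA₁def
    have hA₁ : 0 < A₁ := Real.exp_pos _
    have hinit₁ : ∀ x, u x 0 ≤ A₁ * Real.exp (-(lam₁ * x)) := by
      intro x
      rw [hu0 x]
      rcases le_or_gt |x| ρ₁ with hxx | hxx
      · have hx1 : x ≤ ρ₁ := le_trans (le_abs_self x) hxx
        have he : A₁ * Real.exp (-(lam₁ * x)) = Real.exp (lam₁ * ρ₁ + -(lam₁ * x)) :=
          (Real.exp_add _ _).symm
        rw [he]
        calc u₀ x ≤ 1 := (hu₀b x).2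
          _ ≤ Real.exp (lam₁ * ρ₁ + -(lam₁ * x)) := Real.one_le_exp (by nlinarith)
      · rw [hρ₁ x hxx]; positivity
    have hderu_front : ∀ x t : ℝ, 0 < t → ∃ g, HasDerivAt (fun τ => u x τ) g t ∧
        g ≤ d₁ * ((∫ y : ℝ, J₁ (x - y) * u y t) - u x t) + r₁ * u x t := by
      intro x t ht
      refine ⟨_, hpdeu x t ht, ?_⟩
      have hu := hubd x t ht.le
      have hv := hvbd x t ht.le
      have h1 : α (x - s * t) - u x t - a * v x t ≤ 1 := by
        nlinarith [hαle1 (x - s * t), mul_nonneg ha.le hv.1]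
      have h2 : r₁ * u x t * (α (x - s * t) - u x t - a * v x t) ≤ r₁ * u x t * 1 :=
        mul_le_mul_of_nonneg_left h1 (mul_nonneg hr₁.le hu.1)
      have h3 : r₁ * u x t * 1 = r₁ * u x t := by ring
      linarith
    have hfront := front_comparison d₁ r₁ lam₁ c₁ A₁ 1 J₁ R₁ hd₁ hlam₁ hA₁ (by norm_num)
      hJ₁c hR₁0 hJ₁s hJ₁0 hJ₁int hceq₁ u hubd hctu hcxu hinit₁ hderu_front
    set θ : ℝ := (s - c₁) / 2 with hθdef
    have hθ : 0 < θ := by rw [hθdef]; linarith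
    obtain ⟨Tf, hTf⟩ := exp_decay_T A₁ (lam₁ * θ) ε hA₁ (by positivity) hε
    obtain ⟨D, Tb, hTb⟩ := hUdecay ε hε
    refine ⟨max (max Tf Tb) (max 0 (D / θ)), fun t ht x => ?_⟩
    have ht0 : (0:ℝ) ≤ t :=
      le_trans (le_trans (le_max_left 0 (D / θ)) (le_max_right _ _)) ht
    have htD : D / θ ≤ t :=
      le_trans (le_trans (le_max_right 0 (D / θ)) (le_max_right _ _)) ht
    rw [div_le_iff₀ hθ] at htD
    rcases le_or_gt x ((c₁ + θ) * t) with hx | hx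
    · -- behind the front
      apply hTb t (le_trans (le_trans (le_max_right Tf Tb) (le_max_left _ _)) ht) x
      have : (c₁ + θ) * t = s * t - θ * t := by rw [hθdef]; ring
      have h2 : θ * t = t * θ := by ring
      linarith
    · -- ahead of the front
      have h1 := hfront x t ht0
      have h2 : A₁ * Real.exp (-(lam₁ * (x - c₁ * t))) ≤ A₁ * Real.exp (-(lam₁ * θ * t)) := by
        apply mul_le_mul_of_nonneg_left _ hA₁.le
        apply Real.exp_le_exp.mpr
        nlinarith [hlam₁.le]
      have h3 := hTf t (le_trans (le_trans (le_max_left Tf Tb) (le_max_left _ _)) ht)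
      linarith
  · -- extinction of v
    intro hms ε hε
    have hr₂b : 0 < r₂ * (b - 1) := mul_pos hr₂ (by linarith)
    obtain ⟨lam₂, c₂, hlam₂, hc₂0, hc₂s, hceq₂⟩ := speed_extract hd₂ hr₂b hM1₂ hms
    obtain ⟨ρ₂, hρ₂0, hρ₂⟩ := kernel_radius hv₀supp
    set A₂ : ℝ := (b - 1) * Real.exp (lam₂ * ρ₂) with hA₂def
    have hA₂ : 0 < A₂ := mul_pos (by linarith) (Real.exp_pos _)
    have hinit₂ : ∀ x, v x 0 ≤ A₂ * Real.exp (-(lam₂ * x)) := by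
      intro x
      rw [hv0 x]
      rcases le_or_gt |x| ρ₂ with hxx | hxx
      · have hx1 : x ≤ ρ₂ := le_trans (le_abs_self x) hxx
        have he : A₂ * Real.exp (-(lam₂ * x)) = (b - 1) * Real.exp (lam₂ * ρ₂ + -(lam₂ * x)) := by
          rw [hA₂def, Real.exp_add]; ring
        rw [he]
        calc v₀ x ≤ b - 1 := (hv₀b x).2
          _ ≤ (b - 1) * Real.exp (lam₂ * ρ₂ + -(lam₂ * x)) := by
            nlinarith [Real.one_le_exp (show (0:ℝ) ≤ lam₂ * ρ₂ + -(lam₂ * x) by nlinarith)]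
      · rw [hρ₂ x hxx]; positivity
    have hderv_front : ∀ x t : ℝ, 0 < t → ∃ g, HasDerivAt (fun τ => v x τ) g t ∧
        g ≤ d₂ * ((∫ y : ℝ, J₂ (x - y) * v y t) - v x t) + (r₂ * (b - 1)) * v x t := by
      intro x t ht
      refine ⟨_, hpdev x t ht, ?_⟩
      have hu := hubd x t ht.le
      have hv := hvbd x t ht.le
      have h1 : -1 + b * u x t - v x t ≤ b - 1 := by nlinarith
      have h2 : r₂ * v x t * (-1 + b * u x t - v x t) ≤ r₂ * v x t * (b - 1) :=
        mul_le_mul_of_nonneg_left h1 (mul_nonneg hr₂.le hv.1)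
      have h3 : r₂ * v x t * (b - 1) = (r₂ * (b - 1)) * v x t := by ring
      linarith
    have hfrontv := front_comparison d₂ (r₂ * (b - 1)) lam₂ c₂ A₂ (b - 1) J₂ R₂ hd₂ hlam₂ hA₂
      (by linarith) hJ₂c hR₂0 hJ₂s hJ₂0 hJ₂int hceq₂ v hvbd hctv hcxv hinit₂ hderv_front
    set σ₂ : ℝ := (c₂ + s) / 2 with hσ₂def
    set σ₃ : ℝ := (σ₂ + s) / 2 with hσ₃def
    have hσ₂0 : 0 ≤ σ₂ := by rw [hσ₂def]; linarith
    have hσ₂s : σ₂ < s := by rw [hσ₂def]; linarith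
    have hσ₃0 : 0 ≤ σ₃ := by rw [hσ₃def]; linarith
    have hσ₃s : σ₃ < s := by rw [hσ₃def]; linarith
    have hσ₂₃ : σ₂ < σ₃ := by rw [hσ₃def]; linarith
    obtain ⟨Du, Tu, hTu⟩ := hUdecay (1 / (2 * b)) (by positivity)
    set T₁v : ℝ := max (max 1 Tu) (max 0 (Du / (s - σ₃))) with hT₁vdef
    have hT₁v1 : 1 ≤ T₁v := le_trans (le_max_left 1 Tu) (le_max_left _ _)
    have husmall : ∀ x t : ℝ, T₁v ≤ t → x ≤ σ₃ * t → u x t ≤ 1 / (2 * b) := by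
      intro x t ht hx
      apply hTu t (le_trans (le_trans (le_max_right 1 Tu) (le_max_left _ _)) ht) x
      have htD : Du / (s - σ₃) ≤ t :=
        le_trans (le_trans (le_max_right 0 _) (le_max_right _ _)) ht
      rw [div_le_iff₀ (by linarith)] at htD
      nlinarith
    have hderv_host : ∀ x t : ℝ, T₁v ≤ t → x ≤ σ₃ * t - 0 →
        ∃ g, HasDerivAt (fun τ => v x τ) g t ∧
          g ≤ d₂ * ((∫ y : ℝ, J₂ (x - y) * v y t) - v x t) - (r₂ / 2) * v x t := by
      intro x t ht hx
      have ht0 : 0 < t := lt_of_lt_of_le one_pos (le_trans hT₁v1 ht)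
      refine ⟨_, hpdev x t ht0, ?_⟩
      have husm := husmall x t ht (by linarith)
      have hv := hvbd x t ht0.le
      have hu := hubd x t ht0.le
      have hbu : b * u x t ≤ 1 / 2 := by
        calc b * u x t ≤ b * (1 / (2 * b)) :=
              mul_le_mul_of_nonneg_left husm (by positivity)
          _ = 1 / 2 := by field_simp
      have h1 : -1 + b * u x t - v x t ≤ -(1 / 2) := by linarith [hv.1]
      have h2 : r₂ * v x t * (-1 + b * u x t - v x t) ≤ r₂ * v x t * (-(1 / 2)) :=
        mul_le_mul_of_nonneg_left h1 (mul_nonneg hr₂.le hv.1)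
      have h3 : r₂ * v x t * (-(1 / 2)) = -((r₂ / 2) * v x t) := by ring
      linarith
    have hVdecay := hostile_decay d₂ (r₂ / 2) σ₃ 0 (b - 1) T₁v J₂ R₂ hd₂ (by positivity)
      hσ₃0 hT₁v1 (by linarith) hJ₂c hR₂0 hJ₂s hJ₂0 hJ₂int v hvbd hctv hcxv hderv_host
    obtain ⟨Dv, Tv, hTv⟩ := hVdecay ε hε
    set θ₂ : ℝ := (s - c₂) / 2 with hθ₂def
    have hθ₂ : 0 < θ₂ := by rw [hθ₂def]; linarith
    obtain ⟨Tf₂, hTf₂⟩ := exp_decay_T A₂ (lam₂ * θ₂) ε hA₂ (by positivity) hε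
    refine ⟨max (max Tf₂ Tv) (max 0 (Dv / (σ₃ - σ₂))), fun t ht x => ?_⟩
    have ht0 : (0:ℝ) ≤ t :=
      le_trans (le_trans (le_max_left 0 _) (le_max_right _ _)) ht
    have htD : Dv / (σ₃ - σ₂) ≤ t :=
      le_trans (le_trans (le_max_right 0 _) (le_max_right _ _)) ht
    rw [div_le_iff₀ (by linarith)] at htD
    rcases le_or_gt x (σ₂ * t) with hx | hx
    · -- behind the front
      apply hTv t (le_trans (le_trans (le_max_right Tf₂ Tv) (le_max_left _ _)) ht) x
      nlinarith
    · -- ahead of the front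
      have h1 := hfrontv x t ht0
      have hσθ : σ₂ = c₂ + θ₂ := by rw [hσ₂def, hθ₂def]; ring
      have h2 : A₂ * Real.exp (-(lam₂ * (x - c₂ * t))) ≤ A₂ * Real.exp (-(lam₂ * θ₂ * t)) := by
        apply mul_le_mul_of_nonneg_left _ hA₂.le
        apply Real.exp_le_exp.mpr
        have h4 : σ₂ * t = c₂ * t + θ₂ * t := by rw [hσθ]; ring
        have h5 : θ₂ * t ≤ x - c₂ * t := by linarith
        linarith [mul_le_mul_of_nonneg_left h5 hlam₂.le]
      have h3 := hTf₂ t (le_trans (le_trans (le_max_left Tf₂ Tv) (le_max_left _ _)) ht)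
      linarith
end

section
/- Vanishing behind the climate front, nonlocal case (Theorem 4.3 (i)). Assume b > 1. Let u₀, v₀ be continuous with 0 ≤ u₀ ≤ 1, 0 ≤ v₀ ≤ b−1, and suppose there is a constant K₁ such that u₀(x) = v₀(x) = 0 for all x ≤ K₁. Let (u, v) be a solution of the nonlocal Cauchy problem with these initial data. Then for every ζ > 0: if s ≤ s*, then sup_{x ≤ (s−ζ)t} u(x,t) → 0 as t → +∞ (i.e., for every ε > 0 there is T such that u(x,t) ≤ ε whenever t ≥ T and x ≤ (s−ζ)t); and if s ≤ s_*, then sup_{x ≤ (s−ζ)t} v(x,t) → 0 as t → +∞. -/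
open MeasureTheory Filter Topology

lemma kernel_shift_integrable {J : ℝ → ℝ} (hJ : KernelGood J) {f : ℝ → ℝ}
    (hf : Continuous f) (x : ℝ) : Integrable (fun y => J (x - y) * f y) := by
  have hc : Continuous fun y => J (x - y) :=
    hJ.1.comp (continuous_const.sub continuous_id)
  have hcs : HasCompactSupport fun y => J (x - y) :=
    hJ.2.2.1.comp_homeomorph (Homeomorph.subLeft x)
  exact (hc.mul hf).integrable_of_hasCompactSupport (hcs.mul_right)

lemma kernel_shift_integral_one {J : ℝ → ℝ} (hJ : KernelGood J) (x : ℝ) :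
    ∫ y : ℝ, J (x - y) = 1 := by
  rw [integral_sub_left_eq_self J volume x]; exact hJ.2.2.2.1

lemma kernel_exp_integrable {J : ℝ → ℝ} (hJ : KernelGood J) (g : ℝ → ℝ)
    (hg : Continuous g) : Integrable (fun y => J y * g y) :=
  (hJ.1.mul hg).integrable_of_hasCompactSupport (hJ.2.2.1.mul_right)

lemma kernel_exp_symm {J : ℝ → ℝ} (hJ : KernelGood J) (l : ℝ) :
    (∫ y : ℝ, J y * Real.exp (-(l * y))) = ∫ y : ℝ, J y * Real.exp (l * y) := by
  have h2 := integral_sub_left_eq_self (fun z => J z * Real.exp (-(l * z))) volume 0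
  have heq : (fun y : ℝ => J (0 - y) * Real.exp (-(l * (0 - y))))
      = fun y : ℝ => J y * Real.exp (l * y) := by
    funext y
    rw [zero_sub, hJ.2.2.2.2]
    ring_nf
  rw [← h2, heq]

lemma one_le_A {J : ℝ → ℝ} (hJ : KernelGood J) (l : ℝ) :
    1 ≤ ∫ y : ℝ, J y * Real.exp (l * y) := by
  have h1 : Integrable (fun y => J y * Real.exp (l * y)) :=
    kernel_exp_integrable hJ _ (by continuity)
  have h2 : Integrable (fun y => J y * Real.exp (-(l * y))) :=
    kernel_exp_integrable hJ _ (by continuity)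
  have hJint : Integrable J := hJ.1.integrable_of_hasCompactSupport hJ.2.2.1
  have key : (∫ y : ℝ, J y) ≤ ∫ y : ℝ, J y * Real.exp (l * y) := by
    have hsum : (∫ y : ℝ, J y * Real.exp (l * y)) + (∫ y : ℝ, J y * Real.exp (-(l * y)))
        = ∫ y : ℝ, (J y * Real.exp (l * y) + J y * Real.exp (-(l * y))) :=
      (integral_add h1 h2).symm
    have hpt : ∀ y : ℝ, 2 * J y ≤ J y * Real.exp (l * y) + J y * Real.exp (-(l * y)) := by
      intro y
      have hc := Real.one_le_cosh (l * y)
      rw [Real.cosh_eq] at hc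
      nlinarith [hJ.2.1 y]
    have hmono : (∫ y : ℝ, 2 * J y) ≤
        ∫ y : ℝ, (J y * Real.exp (l * y) + J y * Real.exp (-(l * y))) :=
      integral_mono (hJint.const_mul 2) (h1.add h2) hpt
    rw [integral_const_mul] at hmono
    rw [kernel_exp_symm hJ l] at hsum
    linarith
  rw [hJ.2.2.2.1] at key
  exact key

lemma contA {J : ℝ → ℝ} (hJ : KernelGood J) :
    ContinuousAt (fun l => ∫ y : ℝ, J y * Real.exp (l * y)) 0 := by
  apply continuousAt_of_dominated (bound := fun y => J y * Real.exp |y|)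
  · exact Eventually.of_forall fun l =>
      ((hJ.1.mul (by continuity)).aestronglyMeasurable)
  · have h1 : Set.Icc (-1 : ℝ) 1 ∈ 𝓝 (0 : ℝ) := Icc_mem_nhds (by norm_num) (by norm_num)
    filter_upwards [h1] with l hl
    refine Eventually.of_forall fun y => ?_
    have hJy := hJ.2.1 y
    have h2 : l * y ≤ |y| := by
      calc l * y ≤ |l * y| := le_abs_self _
      _ = |l| * |y| := abs_mul l y
      _ ≤ 1 * |y| := by
          apply mul_le_mul_of_nonneg_right _ (abs_nonneg y)
          rw [abs_le]; exact hl
      _ = |y| := one_mul _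
    rw [Real.norm_eq_abs, abs_mul, abs_of_nonneg hJy, abs_of_pos (Real.exp_pos _)]
    exact mul_le_mul_of_nonneg_left (Real.exp_le_exp.mpr h2) hJy
  · exact kernel_exp_integrable hJ _ (by continuity)
  · exact Eventually.of_forall fun y => (by fun_prop : Continuous fun l : ℝ => J y * Real.exp (l * y)).continuousAt

lemma exists_lambda {J : ℝ → ℝ} (hJ : KernelGood J) (d s δ : ℝ) (hδ : 0 < δ) :
    ∃ l : ℝ, 0 < l ∧ d * ((∫ y : ℝ, J y * Real.exp (l * y)) - 1) + l * s ≤ δ := by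
  have hc : ContinuousAt (fun l => d * ((∫ y : ℝ, J y * Real.exp (l * y)) - 1) + l * s) 0 := by
    exact ((contA hJ).sub continuousAt_const).const_mul d |>.add
      ((continuousAt_id).mul continuousAt_const)
  have hval : d * ((∫ y : ℝ, J y * Real.exp ((0:ℝ) * y)) - 1) + 0 * s = 0 := by
    simp [hJ.2.2.2.1]
  have hev : ∀ᶠ l in 𝓝 (0:ℝ),
      d * ((∫ y : ℝ, J y * Real.exp (l * y)) - 1) + l * s < δ := by
    have h0 : (fun l => d * ((∫ y : ℝ, J y * Real.exp (l * y)) - 1) + l * s) 0 < δ := by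
      simpa [hJ.2.2.2.1] using hδ
    exact hc.eventually (eventually_lt_nhds h0)
  have hev' : ∀ᶠ l in 𝓝[>] (0:ℝ),
      d * ((∫ y : ℝ, J y * Real.exp (l * y)) - 1) + l * s < δ :=
    nhdsWithin_le_nhds hev
  obtain ⟨l, hl1, hl2⟩ := (hev'.and self_mem_nhdsWithin).exists
  exact ⟨l, hl2, hl1.le⟩

set_option maxHeartbeats 2000000 in
lemma comparison
    (d s lam M B : ℝ) (J : ℝ → ℝ) (u R : ℝ → ℝ → ℝ)
    (hd : 0 < d) (hs : 0 < s) (hlam : 0 < lam) (hB : 0 < B)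
    (hJ : KernelGood J)
    (hUc : Continuous fun p : ℝ × ℝ => u p.1 (max p.2 0))
    (hub : ∀ x t : ℝ, 0 ≤ t → 0 ≤ u x t ∧ u x t ≤ B)
    (hu0 : ∀ x ≤ M, u x 0 = 0)
    (hRc : ∀ x : ℝ, ContinuousOn (fun t => R x t) (Set.Ici 0))
    (hderiv : ∀ x t : ℝ, 0 < t → HasDerivAt (fun τ => u x τ)
      (d * ((∫ y : ℝ, J (x - y) * u y t) - u x t) + R x t) t)
    (hRle : ∀ x t : ℝ, 0 < t → x - s * t < M →
      R x t ≤ -(d * ((∫ y : ℝ, J y * Real.exp (lam * y)) - 1) + lam * s) * u x t) :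
    ∀ x t : ℝ, 0 ≤ t → u x t ≤ B * Real.exp (lam * (x - s * t - M)) := by
  set A : ℝ := ∫ y : ℝ, J y * Real.exp (lam * y) with hA_def
  have hA : 1 ≤ A := one_le_A hJ lam
  set ψ : ℝ → ℝ → ℝ := fun x t => B * Real.exp (lam * (x - s * t - M)) with hψ_def
  set w : ℝ → ℝ → ℝ := fun x t => min B (ψ x t) with hw_def
  set g : ℝ → ℝ → ℝ := fun x t => u x (max t 0) - w x t with hg_def
  set Z : ℝ → ℝ := fun t => sSup (Set.range fun x => max (g x t) 0) with hZ_def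
  -- basic continuity facts
  have hψc : Continuous fun p : ℝ × ℝ => ψ p.1 p.2 := by
    simp only [hψ_def]; fun_prop
  have hwc : Continuous fun p : ℝ × ℝ => w p.1 p.2 :=
    continuous_const.min hψc
  have hψcx : ∀ x : ℝ, Continuous fun τ => ψ x τ := by
    intro x; simp only [hψ_def]; fun_prop
  have hgc : Continuous fun p : ℝ × ℝ => g p.1 p.2 := by
    simp only [hg_def]
    exact hUc.sub hwc
  have hgcx : ∀ x, Continuous fun t => g x t := fun x =>
    hgc.comp (Continuous.prodMk_right x)
  have hgct : ∀ t, Continuous fun x => g x t := fun t =>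
    hgc.comp (continuous_id.prodMk continuous_const)
  have hucx : ∀ x, Continuous fun t => u x (max t 0) := fun x =>
    hUc.comp (Continuous.prodMk_right x)
  have huct : ∀ t : ℝ, 0 ≤ t → Continuous fun x => u x t := by
    intro t ht
    have : Continuous fun x => u x (max t 0) :=
      hUc.comp (continuous_id.prodMk continuous_const)
    simpa [max_eq_left ht] using this
  -- bounds
  have hψpos : ∀ x t, 0 < ψ x t := fun x t => mul_pos hB (Real.exp_pos _)
  have hwpos : ∀ x t, 0 < w x t := fun x t => lt_min hB (hψpos x t)
  have hwle : ∀ x t, w x t ≤ ψ x t := fun x t => min_le_right _ _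
  have hwleB : ∀ x t, w x t ≤ B := fun x t => min_le_left _ _
  have hgB : ∀ x t, g x t ≤ B := by
    intro x t
    have h1 := (hub x (max t 0) (le_max_right _ _)).2
    have h2 := hwpos x t
    simp only [hg_def]; linarith
  have hbdd : ∀ t, BddAbove (Set.range fun x => max (g x t) 0) := by
    intro t
    refine ⟨B, ?_⟩
    rintro z ⟨x, rfl⟩
    exact max_le (hgB x t) hB.le
  have hne : ∀ t, (Set.range fun x => max (g x t) 0).Nonempty :=
    fun t => ⟨max (g 0 t) 0, ⟨0, rfl⟩⟩
  have hZ0 : ∀ t, 0 ≤ Z t := by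
    intro t
    have := le_csSup (hbdd t) (Set.mem_range_self (f := fun x => max (g x t) 0) 0)
    exact le_trans (le_max_right _ _) this
  have hZB : ∀ t, Z t ≤ B := by
    intro t
    apply csSup_le (hne t)
    rintro z ⟨x, rfl⟩
    exact max_le (hgB x t) hB.le
  have hgZ : ∀ x t, g x t ≤ Z t := by
    intro x t
    exact le_trans (le_max_left _ _)
      (le_csSup (hbdd t) (Set.mem_range_self (f := fun x => max (g x t) 0) x))
  -- Z is measurable and interval integrable
  have hZlsc : LowerSemicontinuous Z := by
    intro t c hc
    obtain ⟨z, ⟨x, rfl⟩, hx⟩ := exists_lt_of_lt_csSup (hne t) hc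
    have hcont : Continuous fun t' => max (g x t') 0 := (hgcx x).max continuous_const
    have hev : ∀ᶠ t' in 𝓝 t, c < max (g x t') 0 :=
      (hcont.continuousAt).eventually (eventually_gt_nhds hx)
    filter_upwards [hev] with t' ht'
    exact lt_of_lt_of_le ht'
      (le_csSup (hbdd t') (Set.mem_range_self (f := fun x => max (g x t') 0) x))
  have hZmeas : Measurable Z := hZlsc.measurable
  have hZint : ∀ a b : ℝ, IntervalIntegrable Z volume a b := by
    intro a b
    refine (intervalIntegrable_const (c := B)).mono_fun
      hZmeas.aestronglyMeasurable.restrict ?_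
    refine Eventually.of_forall fun τ => ?_
    simp only [Real.norm_eq_abs]
    rw [abs_of_nonneg (hZ0 τ), abs_of_pos hB]
    exact hZB τ
  -- convolution with ψ
  have hconv_psi : ∀ x t : ℝ, (∫ y : ℝ, J (x - y) * ψ y t) = A * ψ x t := by
    intro x t
    have key : ∀ y : ℝ, J (x - y) * ψ y t
        = ψ x t * ((fun z => J z * Real.exp (-(lam * z))) (x - y)) := by
      intro y
      simp only [hψ_def]
      rw [show lam * (y - s * t - M) = lam * (x - s * t - M) + -(lam * (x - y)) by ring,
        Real.exp_add]
      ring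
    calc (∫ y : ℝ, J (x - y) * ψ y t)
        = ∫ y : ℝ, ψ x t * ((fun z => J z * Real.exp (-(lam * z))) (x - y)) := by
          simp only [key]
      _ = ψ x t * ∫ y : ℝ, (fun z => J z * Real.exp (-(lam * z))) (x - y) :=
          integral_const_mul _ _
      _ = ψ x t * ∫ z : ℝ, J z * Real.exp (-(lam * z)) := by
          rw [integral_sub_left_eq_self (fun z => J z * Real.exp (-(lam * z))) volume x]
      _ = A * ψ x t := by rw [kernel_exp_symm hJ lam]; ring
  -- the convolution bound
  have hconvle : ∀ x t : ℝ, 0 ≤ t →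
      (∫ y : ℝ, J (x - y) * u y t) ≤ A * ψ x t + Z t := by
    intro x t ht
    have h1 : Integrable (fun y => J (x - y) * u y t) :=
      kernel_shift_integrable hJ (huct t ht) x
    have h2 : Integrable (fun y => J (x - y) * (ψ y t + Z t)) :=
      kernel_shift_integrable hJ (by fun_prop) x
    have hpt : ∀ y : ℝ, J (x - y) * u y t ≤ J (x - y) * (ψ y t + Z t) := by
      intro y
      apply mul_le_mul_of_nonneg_left _ (hJ.2.1 _)
      have hg1 : u y (max t 0) - w y t ≤ Z t := hgZ y t
      rw [max_eq_left ht] at hg1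
      linarith [hwle y t]
    calc (∫ y : ℝ, J (x - y) * u y t) ≤ ∫ y : ℝ, J (x - y) * (ψ y t + Z t) :=
          integral_mono h1 h2 hpt
      _ = (∫ y : ℝ, (J (x - y) * ψ y t + J (x - y) * Z t)) := by
          congr 1; funext y; ring
      _ = (∫ y : ℝ, J (x - y) * ψ y t) + ∫ y : ℝ, J (x - y) * Z t := by
          apply integral_add (kernel_shift_integrable hJ (by fun_prop) x)
          exact kernel_shift_integrable hJ (by fun_prop) x
      _ = A * ψ x t + (∫ y : ℝ, J (x - y)) * Z t := by
          rw [hconv_psi, integral_mul_const]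
      _ = A * ψ x t + Z t := by rw [kernel_shift_integral_one hJ, one_mul]
  -- derivative of ψ
  have hψd : ∀ x τ : ℝ, HasDerivAt (fun τ => ψ x τ) (-(lam * s) * ψ x τ) τ := by
    intro x τ
    have heq : (fun τ : ℝ => lam * (x - s * τ - M))
        = fun τ : ℝ => (-(lam * s)) * τ + lam * (x - M) := by funext τ; ring
    have h1 : HasDerivAt (fun τ : ℝ => lam * (x - s * τ - M)) (-(lam * s)) τ := by
      rw [heq]
      simpa using ((hasDerivAt_id τ).const_mul (-(lam * s))).add_const (lam * (x - M))
    have h2 := (h1.exp).const_mul B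
    simpa only [hψ_def] using h2.congr_deriv (by ring)
  -- initial comparison
  have hg0 : ∀ x : ℝ, g x 0 ≤ 0 := by
    intro x
    simp only [hg_def, max_self, max_eq_left le_rfl]
    rcases le_or_gt x M with hx | hx
    · rw [hu0 x hx]
      linarith [hwpos x 0]
    · have h1 : (1:ℝ) ≤ Real.exp (lam * (x - s * 0 - M)) := by
        rw [Real.one_le_exp_iff]
        have : 0 ≤ x - M := by linarith
        nlinarith
      have : B ≤ ψ x 0 := by
        simp only [hψ_def]; nlinarith
      have hw : w x 0 = B := min_eq_left this
      rw [hw]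
      linarith [(hub x 0 le_rfl).2]
  -- the key step: for t > 0 with g x t > 0
  have hkeystep : ∀ x t : ℝ, 0 < t → 0 < g x t →
      g x t ≤ d * ∫ τ in (0:ℝ)..t, Z τ := by
    intro x t ht hgpos
    -- last zero-crossing
    set S : Set ℝ := Set.Icc 0 t ∩ {τ | g x τ ≤ 0} with hS_def
    have hSclosed : IsClosed S :=
      isClosed_Icc.inter (isClosed_le (hgcx x) continuous_const)
    have hSne : S.Nonempty := ⟨0, ⟨le_rfl, ht.le⟩, hg0 x⟩
    have hSbdd : BddAbove S := ⟨t, fun τ hτ => hτ.1.2⟩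
    set σ : ℝ := sSup S with hσ_def
    have hσmem : σ ∈ S := hSclosed.csSup_mem hSne hSbdd
    have hσ0 : 0 ≤ σ := hσmem.1.1
    have hσt : σ ≤ t := hσmem.1.2
    have hgσ : g x σ ≤ 0 := hσmem.2
    have hσlt : σ < t := by
      rcases lt_or_eq_of_le hσt with h | h
      · exact h
      · exfalso; rw [h] at hgσ; linarith
    have hafter : ∀ τ, σ < τ → τ ≤ t → 0 < g x τ := by
      intro τ h1 h2
      by_contra hcon
      push_neg at hcon
      have : τ ∈ S := ⟨⟨le_trans hσ0 h1.le, h2⟩, hcon⟩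
      exact absurd (le_csSup hSbdd this) (not_le.mpr h1)
    -- u agrees with max version on [0, ∞)
    have humax : ∀ τ : ℝ, 0 ≤ τ → u x (max τ 0) = u x τ := by
      intro τ hτ; rw [max_eq_left hτ]
    -- F and its properties
    set F : ℝ → ℝ := fun τ => d * ((∫ y : ℝ, J (x - y) * u y τ) - u x τ) + R x τ with hF_def
    have hconvc : Continuous fun τ : ℝ => ∫ y : ℝ, J (x - y) * u y (max τ 0) := by
      apply continuous_of_dominated (bound := fun y => J (x - y) * B)
      · intro τ
        exact ((hJ.1.comp (continuous_const.sub continuous_id)).mul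
          (hUc.comp (continuous_id.prodMk continuous_const))).aestronglyMeasurable
      · intro τ
        refine Eventually.of_forall fun y => ?_
        have h1 := hub y (max τ 0) (le_max_right _ _)
        have h2 := hJ.2.1 (x - y)
        rw [Real.norm_eq_abs, abs_of_nonneg (mul_nonneg h2 h1.1)]
        exact mul_le_mul_of_nonneg_left h1.2 h2
      · exact kernel_shift_integrable hJ continuous_const x
      · exact Eventually.of_forall fun y => continuous_const.mul (hUc.comp (Continuous.prodMk_right y))
    have hFcont : ContinuousOn F (Set.Icc σ t) := by
      have hGc : ContinuousOn (fun τ => d * ((∫ y : ℝ, J (x - y) * u y (max τ 0))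
          - u x (max τ 0)) + R x τ) (Set.Icc σ t) := by
        apply ContinuousOn.add _ ((hRc x).mono (fun τ hτ => hτ.1.trans' hσ0))
        exact (((hconvc.sub (hucx x)).continuousOn).const_smul d).congr
          (fun τ _ => by simp [smul_eq_mul])
      apply hGc.congr
      intro τ hτ
      have hτ0 : 0 ≤ τ := le_trans hσ0 hτ.1
      simp only [hF_def, max_eq_left hτ0]
    have hFint : IntervalIntegrable F volume σ t :=
      (hFcont.mono (by rw [Set.uIcc_of_le hσt])).intervalIntegrable
    have hucont : ContinuousOn (fun τ => u x τ) (Set.Icc σ t) := by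
      apply (hucx x).continuousOn.congr
      intro τ hτ
      exact (humax τ (le_trans hσ0 hτ.1)).symm
    have hFTCu : (∫ τ in σ..t, F τ) = u x t - u x σ := by
      apply intervalIntegral.integral_eq_sub_of_hasDeriv_right_of_le hσt hucont _ hFint
      intro τ hτ
      have hτ0 : 0 < τ := lt_of_le_of_lt hσ0 hτ.1
      exact (hderiv x τ hτ0).hasDerivWithinAt
    have hψint : IntervalIntegrable (fun τ => -(lam * s) * ψ x τ) volume σ t := by
      apply Continuous.intervalIntegrable
      exact continuous_const.mul (hψcx x)
    have hFTCψ : (∫ τ in σ..t, -(lam * s) * ψ x τ) = ψ x t - ψ x σ :=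
      intervalIntegral.integral_eq_sub_of_hasDerivAt (fun τ _ => hψd x τ) hψint
    -- pointwise key bound on (σ, t]
    have hkey : ∀ τ ∈ Set.Ioc σ t, F τ + lam * s * ψ x τ ≤ d * Z τ := by
      intro τ hτ
      have hτ0 : 0 < τ := lt_of_le_of_lt hσ0 hτ.1
      have hgτ : 0 < g x τ := hafter τ hτ.1 hτ.2
      have huw : w x τ < u x τ := by
        have : 0 < u x (max τ 0) - w x τ := hgτ
        rw [max_eq_left hτ0.le] at this
        linarith
      have huB := (hub x τ hτ0.le).2
      have hu0' := (hub x τ hτ0.le).1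
      have hψlt : ψ x τ < B := by
        by_contra hcon
        push_neg at hcon
        have : w x τ = B := min_eq_left hcon
        rw [this] at huw; linarith
      have hwψ : w x τ = ψ x τ := min_eq_right hψlt.le
      have hxM : x - s * τ < M := by
        have hexp : Real.exp (lam * (x - s * τ - M)) < 1 := by
          by_contra hcon
          push_neg at hcon
          have : B ≤ ψ x τ := by simp only [hψ_def]; nlinarith
          linarith
        rw [Real.exp_lt_one_iff] at hexp
        nlinarith
      have hR := hRle x τ hτ0 hxM
      have hconv := hconvle x τ hτ0.le
      have huψ : ψ x τ ≤ u x τ := by rw [← hwψ]; exact huw.le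
      have hψp := hψpos x τ
      simp only [hF_def]
      nlinarith [mul_le_mul_of_nonneg_left hconv hd.le,
        mul_nonneg (mul_nonneg hd.le (sub_nonneg.mpr hA)) (sub_nonneg.mpr huψ),
        mul_nonneg hd.le (sub_nonneg.mpr huψ),
        mul_nonneg (mul_nonneg hlam.le hs.le) (sub_nonneg.mpr huψ)]
    -- integrate
    have hsum_int : IntervalIntegrable (fun τ => F τ + lam * s * ψ x τ) volume σ t := by
      apply hFint.add
      apply Continuous.intervalIntegrable
      exact continuous_const.mul (hψcx x)
    have hdZint : IntervalIntegrable (fun τ => d * Z τ) volume σ t :=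
      (hZint σ t).const_mul d
    have hle1 : (∫ τ in σ..t, (F τ + lam * s * ψ x τ)) ≤ ∫ τ in σ..t, d * Z τ := by
      apply intervalIntegral.integral_mono_ae_restrict hσt hsum_int hdZint
      have hrw : volume.restrict (Set.Icc σ t) = volume.restrict (Set.Ioc σ t) :=
        (Measure.restrict_congr_set Ioc_ae_eq_Icc).symm
      rw [hrw]
      filter_upwards [ae_restrict_mem measurableSet_Ioc] with τ hτ
      exact hkey τ hτ
    have hint_split : (∫ τ in σ..t, (F τ + lam * s * ψ x τ))
        = (u x t - u x σ) - (ψ x t - ψ x σ) := by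
      rw [intervalIntegral.integral_add hFint (Continuous.intervalIntegrable (u := fun τ => lam * s * ψ x τ)
        (continuous_const.mul (hψcx x)) _ _)]
      rw [hFTCu]
      have : (∫ τ in σ..t, lam * s * ψ x τ) = -(ψ x t - ψ x σ) := by
        rw [← hFTCψ, ← intervalIntegral.integral_neg]
        congr 1; funext τ; ring
      rw [this]; ring
    have hZnonneg : ∀ a b : ℝ, a ≤ b → 0 ≤ ∫ τ in a..b, Z τ := by
      intro a b hab
      exact intervalIntegral.integral_nonneg hab (fun τ _ => hZ0 τ)
    have hle2 : (∫ τ in σ..t, d * Z τ) ≤ d * ∫ τ in (0:ℝ)..t, Z τ := by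
      rw [intervalIntegral.integral_const_mul]
      apply mul_le_mul_of_nonneg_left _ hd.le
      have hadd : (∫ τ in (0:ℝ)..σ, Z τ) + (∫ τ in σ..t, Z τ) = ∫ τ in (0:ℝ)..t, Z τ :=
        intervalIntegral.integral_add_adjacent_intervals (hZint 0 σ) (hZint σ t)
      linarith [hZnonneg 0 σ hσ0]
    -- conclude
    have hwt : w x t = ψ x t := by
      have huwt : w x t < u x t := by
        have : 0 < u x (max t 0) - w x t := hgpos
        rw [max_eq_left ht.le] at this; linarith
      have : ψ x t < B := by
        by_contra hcon
        push_neg at hcon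
        have : w x t = B := min_eq_left hcon
        rw [this] at huwt
        linarith [(hub x t ht.le).2]
      exact min_eq_right this.le
    have hinit : u x σ - ψ x σ ≤ 0 := by
      have h1 : u x (max σ 0) - w x σ ≤ 0 := hgσ
      rw [max_eq_left hσ0] at h1
      linarith [hwle x σ]
    have : g x t = u x t - ψ x t := by
      simp only [hg_def, max_eq_left ht.le, hwt]
    rw [this]
    linarith [hle1, hint_split ▸ hle1, hle2]
  -- main inequality Z t ≤ d ∫₀ᵗ Z
  have hmain : ∀ t : ℝ, 0 ≤ t → Z t ≤ d * ∫ τ in (0:ℝ)..t, Z τ := by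
    intro t ht
    have hrhs : 0 ≤ d * ∫ τ in (0:ℝ)..t, Z τ :=
      mul_nonneg hd.le (intervalIntegral.integral_nonneg ht (fun τ _ => hZ0 τ))
    apply csSup_le (hne t)
    rintro z ⟨x, rfl⟩
    apply max_le _ hrhs
    rcases le_or_gt (g x t) 0 with h | h
    · linarith
    · rcases lt_or_eq_of_le ht with ht' | ht'
      · exact hkeystep x t ht' h
      · exfalso
        rw [← ht'] at h
        linarith [hg0 x]
  -- iteration
  have hiter : ∀ n : ℕ, ∀ t : ℝ, 0 ≤ t → Z t ≤ B * (d * t) ^ n / n.factorial := by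
    intro n
    induction n with
    | zero => intro t ht; simpa using hZB t
    | succ n ih =>
      intro t ht
      have h1 : Z t ≤ d * ∫ τ in (0:ℝ)..t, Z τ := hmain t ht
      have h2 : (∫ τ in (0:ℝ)..t, Z τ) ≤ ∫ τ in (0:ℝ)..t, B * (d * τ) ^ n / n.factorial := by
        apply intervalIntegral.integral_mono_on ht (hZint 0 t)
        · apply Continuous.intervalIntegrable; fun_prop
        · intro τ hτ
          exact ih τ hτ.1
      have h3 : (∫ τ in (0:ℝ)..t, B * (d * τ) ^ n / n.factorial)
          = B * d ^ n / n.factorial * (t ^ (n + 1) / (n + 1)) := by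
        have : (fun τ : ℝ => B * (d * τ) ^ n / n.factorial)
            = fun τ : ℝ => (B * d ^ n / n.factorial) * τ ^ n := by
          funext τ; rw [mul_pow]; ring
        rw [this, intervalIntegral.integral_const_mul, integral_pow]
        norm_num
      have hfac : ((n + 1 : ℕ).factorial : ℝ) = (n.factorial : ℝ) * (n + 1 : ℝ) := by
        rw [Nat.factorial_succ]; push_cast; ring
      have hfacpos : (0:ℝ) < n.factorial := by positivity
      calc Z t ≤ d * ∫ τ in (0:ℝ)..t, Z τ := h1
        _ ≤ d * (B * d ^ n / n.factorial * (t ^ (n + 1) / (n + 1))) := by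
            rw [← h3]
            exact mul_le_mul_of_nonneg_left h2 hd.le
        _ = B * (d * t) ^ (n + 1) / (n + 1).factorial := by
            rw [hfac, mul_pow]
            field_simp
            ring
  -- conclude Z = 0
  have hZzero : ∀ t : ℝ, 0 ≤ t → Z t ≤ 0 := by
    intro t ht
    have hlim : Tendsto (fun n : ℕ => B * (d * t) ^ n / n.factorial) atTop (𝓝 0) := by
      have h1 : Tendsto (fun n : ℕ => (d * t) ^ n / n.factorial) atTop (𝓝 0) :=
        FloorSemiring.tendsto_pow_div_factorial_atTop (d * t)
      have h2 := h1.const_mul B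
      rw [mul_zero] at h2
      apply h2.congr
      intro n; ring
    apply ge_of_tendsto hlim
    exact Eventually.of_forall fun n => hiter n t ht
  -- final conclusion
  intro x t ht
  have h1 : g x t ≤ Z t := hgZ x t
  have h2 : u x (max t 0) - w x t ≤ 0 := le_trans h1 (hZzero t ht)
  rw [max_eq_left ht] at h2
  have := hwle x t
  simp only [hψ_def] at this ⊢
  linarith

lemma contOn_to_cont {f : ℝ → ℝ → ℝ}
    (h : ContinuousOn (fun p : ℝ × ℝ => f p.1 p.2) (Set.univ ×ˢ Set.Ici (0:ℝ))) :
    Continuous fun p : ℝ × ℝ => f p.1 (max p.2 0) := by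
  have hm : Continuous fun p : ℝ × ℝ => ((p.1, max p.2 0) : ℝ × ℝ) :=
    continuous_fst.prodMk (continuous_snd.max continuous_const)
  exact h.comp_continuous hm fun p => by
    simp [Set.mem_prod, le_max_right]

lemma contOn_t {f : ℝ → ℝ → ℝ} (h : Continuous fun p : ℝ × ℝ => f p.1 (max p.2 0))
    (x : ℝ) : ContinuousOn (fun t => f x t) (Set.Ici 0) := by
  apply ((h.comp (Continuous.prodMk_right x)).continuousOn).congr
  intro t ht
  simp only [Function.comp]
  rw [max_eq_left ht]

lemma final_step (B lam s ζ M : ℝ) (hB : 0 < B) (hlam : 0 < lam) (hζ : 0 < ζ)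
    (f : ℝ → ℝ → ℝ)
    (hcomp : ∀ x t : ℝ, 0 ≤ t → f x t ≤ B * Real.exp (lam * (x - s * t - M)))
    (ε : ℝ) (hε : 0 < ε) : ∃ T : ℝ, ∀ t ≥ T, ∀ x ≤ (s - ζ) * t, f x t ≤ ε := by
  refine ⟨max 0 ((Real.log (B / ε) + lam * |M| + 1) / (lam * ζ)), ?_⟩
  intro t ht x hx
  have ht0 : 0 ≤ t := le_trans (le_max_left _ _) ht
  have key : lam * (x - s * t - M) ≤ -(Real.log (B / ε)) - 1 := by
    have h1 : (Real.log (B / ε) + lam * |M| + 1) / (lam * ζ) ≤ t :=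
      le_trans (le_max_right _ _) ht
    have hlz : (0:ℝ) < lam * ζ := mul_pos hlam hζ
    have h2 : Real.log (B / ε) + lam * |M| + 1 ≤ lam * ζ * t := by
      rw [div_le_iff₀ hlz] at h1
      nlinarith [h1]
    have h3 : x - s * t ≤ -(ζ * t) := by nlinarith [hx]
    have h4 : -M ≤ |M| := neg_le_abs M
    nlinarith [mul_le_mul_of_nonneg_left h3 hlam.le,
      mul_le_mul_of_nonneg_left h4 hlam.le]
  calc f x t ≤ B * Real.exp (lam * (x - s * t - M)) := hcomp x t ht0
    _ ≤ B * Real.exp (-(Real.log (B / ε)) - 1) :=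
        mul_le_mul_of_nonneg_left (Real.exp_le_exp.mpr key) hB.le
    _ = ε * Real.exp (-1) := by
        rw [show -(Real.log (B / ε)) - 1 = -(Real.log (B / ε)) + (-1) by ring,
          Real.exp_add, Real.exp_neg, Real.exp_log (div_pos hB hε)]
        field_simp
    _ ≤ ε * 1 := by
        refine mul_le_mul_of_nonneg_left ?_ hε.le
        rw [show (1:ℝ) = Real.exp 0 by simp]
        exact Real.exp_le_exp.mpr (by norm_num)
    _ = ε := mul_one ε


/-- Theorem 4.3 (i): vanishing behind the climate front, nonlocal case. -/
theorem vanishing_behind_front_nonlocal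
    (d₁ d₂ r₁ r₂ a b s : ℝ)
    (hd₁ : 0 < d₁) (hd₂ : 0 < d₂) (hr₁ : 0 < r₁) (hr₂ : 0 < r₂)
    (ha : 0 < a) (hb : 1 < b) (hs : 0 < s)
    (J₁ J₂ α : ℝ → ℝ)
    (hJ₁ : KernelGood J₁) (hJ₂ : KernelGood J₂) (hα : AlphaGood α)
    (u₀ v₀ : ℝ → ℝ)
    (hu₀c : Continuous u₀) (hu₀b : ∀ x, 0 ≤ u₀ x ∧ u₀ x ≤ 1)
    (hv₀c : Continuous v₀) (hv₀b : ∀ x, 0 ≤ v₀ x ∧ v₀ x ≤ b - 1)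
    (K₁ : ℝ) (hK₁ : ∀ x ≤ K₁, u₀ x = 0 ∧ v₀ x = 0)
    (u v : ℝ → ℝ → ℝ)
    (hsol : IsSolPP d₁ d₂ r₁ r₂ a b s J₁ J₂ α u₀ v₀ u v) :
    ∀ ζ > (0:ℝ),
      (s ≤ minSpeed d₁ r₁ J₁ →
        ∀ ε > (0:ℝ), ∃ T : ℝ, ∀ t ≥ T, ∀ x ≤ (s - ζ) * t, u x t ≤ ε) ∧
      (s ≤ minSpeed d₂ (r₂ * (b - 1)) J₂ →
        ∀ ε > (0:ℝ), ∃ T : ℝ, ∀ t ≥ T, ∀ x ≤ (s - ζ) * t, v x t ≤ ε) := by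
  obtain ⟨huc, hvc, hubnd, hvbnd, hu00, hv00, hud, hvd⟩ := hsol
  obtain ⟨hαc, hαm, ⟨L, hL, hαbot⟩, hαtop⟩ := hα
  have hα1 : ∀ z, α z ≤ 1 := by
    intro z
    apply ge_of_tendsto hαtop
    filter_upwards [eventually_ge_atTop z] with y hy
    exact hαm hy
  obtain ⟨M₀, hM₀⟩ : ∃ M₀ : ℝ, α M₀ ≤ L / 2 := by
    have hev : ∀ᶠ z in atBot, α z < L / 2 :=
      hαbot.eventually (eventually_lt_nhds (by linarith))
    obtain ⟨z, hz⟩ := hev.exists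
    exact ⟨z, hz.le⟩
  obtain ⟨lamu, hlamu, hlamu2⟩ :=
    exists_lambda hJ₁ d₁ s (r₁ * (-L) / 2) (by nlinarith)
  set Mu : ℝ := min K₁ M₀ with hMu_def
  have hUc1 : Continuous fun p : ℝ × ℝ => u p.1 (max p.2 0) := contOn_to_cont huc
  have hVc1 : Continuous fun p : ℝ × ℝ => v p.1 (max p.2 0) := contOn_to_cont hvc
  -- comparison for u
  have hucomp : ∀ x t : ℝ, 0 ≤ t → u x t ≤ 1 * Real.exp (lamu * (x - s * t - Mu)) := by
    apply comparison d₁ s lamu Mu 1 J₁ u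
      (fun x t => r₁ * u x t * (α (x - s * t) - u x t - a * v x t))
      hd₁ hs hlamu one_pos hJ₁ hUc1 hubnd
    · intro x hx
      rw [hu00]
      exact (hK₁ x (le_trans hx (min_le_left _ _))).1
    · intro x
      have h1 : ContinuousOn (fun t => u x t) (Set.Ici 0) := contOn_t hUc1 x
      have h2 : ContinuousOn (fun t => v x t) (Set.Ici 0) := contOn_t hVc1 x
      fun_prop
    · exact hud
    · intro x t ht hxM
      have hu' := hubnd x t ht.le
      have hv' := hvbnd x t ht.le
      have hαb : α (x - s * t) ≤ L / 2 :=
        le_trans (hαm (show x - s * t ≤ M₀ by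
          have := min_le_right K₁ M₀; linarith)) hM₀
      have h1 : α (x - s * t) - u x t - a * v x t ≤ L / 2 := by
        nlinarith [hv'.1, hu'.1]
      have h2 : (0:ℝ) ≤ r₁ * u x t := mul_nonneg hr₁.le hu'.1
      have h3 : r₁ * u x t * (α (x - s * t) - u x t - a * v x t)
          ≤ r₁ * u x t * (L / 2) := mul_le_mul_of_nonneg_left h1 h2
      nlinarith [hu'.1, mul_le_mul_of_nonneg_right
        (show d₁ * ((∫ y : ℝ, J₁ y * Real.exp (lamu * y)) - 1) + lamu * s
          ≤ r₁ * (-L) / 2 from hlamu2) hu'.1]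
  -- comparison for v
  set Mv : ℝ := Mu - (Real.log (2 * b) + 1) / lamu with hMv_def
  have hlog2b : 0 < Real.log (2 * b) := Real.log_pos (by linarith)
  have hMvMu : Mv ≤ Mu := by
    have : 0 < (Real.log (2 * b) + 1) / lamu := by positivity
    simp only [hMv_def]; linarith
  obtain ⟨lamv, hlamv, hlamv2⟩ := exists_lambda hJ₂ d₂ s (r₂ / 2) (by positivity)
  have hvcomp : ∀ x t : ℝ, 0 ≤ t →
      v x t ≤ (b - 1) * Real.exp (lamv * (x - s * t - Mv)) := by
    apply comparison d₂ s lamv Mv (b - 1) J₂ v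
      (fun x t => r₂ * v x t * (-1 + b * u x t - v x t))
      hd₂ hs hlamv (by linarith) hJ₂ hVc1 hvbnd
    · intro x hx
      rw [hv00]
      exact (hK₁ x (by linarith [min_le_left K₁ M₀])).2
    · intro x
      have h1 : ContinuousOn (fun t => u x t) (Set.Ici 0) := contOn_t hUc1 x
      have h2 : ContinuousOn (fun t => v x t) (Set.Ici 0) := contOn_t hVc1 x
      fun_prop
    · exact hvd
    · intro x t ht hxM
      have hu' := hubnd x t ht.le
      have hv' := hvbnd x t ht.le
      -- u is small behind the front
      have husmall : u x t ≤ 1 / (2 * b) := by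
        have h1 : u x t ≤ 1 * Real.exp (lamu * (x - s * t - Mu)) := hucomp x t ht.le
        have h2 : lamu * (x - s * t - Mu) ≤ lamu * (Mv - Mu) := by
          apply mul_le_mul_of_nonneg_left _ hlamu.le
          linarith
        have h3 : lamu * (Mv - Mu) = -(Real.log (2 * b) + 1) := by
          simp only [hMv_def]
          field_simp
          ring
        have h4 : Real.exp (lamu * (x - s * t - Mu)) ≤
            Real.exp (-(Real.log (2 * b))) * Real.exp (-1) := by
          rw [← Real.exp_add]
          apply Real.exp_le_exp.mpr
          rw [h3] at h2
          linarith
        have h5 : Real.exp (-(Real.log (2 * b))) = 1 / (2 * b) := by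
          rw [Real.exp_neg, Real.exp_log (by linarith : (0:ℝ) < 2 * b)]
          ring
        have h6 : Real.exp (-1 : ℝ) ≤ 1 := by
          rw [show (1:ℝ) = Real.exp 0 by simp]
          exact Real.exp_le_exp.mpr (by norm_num)
        have h7 : (0:ℝ) < 1 / (2 * b) := by positivity
        calc u x t ≤ 1 * Real.exp (lamu * (x - s * t - Mu)) := h1
          _ = Real.exp (lamu * (x - s * t - Mu)) := one_mul _
          _ ≤ Real.exp (-(Real.log (2 * b))) * Real.exp (-1) := h4
          _ = (1 / (2 * b)) * Real.exp (-1) := by rw [h5]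
          _ ≤ (1 / (2 * b)) * 1 := mul_le_mul_of_nonneg_left h6 h7.le
          _ = 1 / (2 * b) := mul_one _
      have hbu : -1 + b * u x t - v x t ≤ -(1/2 : ℝ) := by
        have : b * u x t ≤ b * (1 / (2 * b)) :=
          mul_le_mul_of_nonneg_left husmall (by linarith)
        have hb0 : (0:ℝ) < b := by linarith
        have : b * (1 / (2 * b)) = 1 / 2 := by
          field_simp
        nlinarith [hv'.1]
      have h2 : (0:ℝ) ≤ r₂ * v x t := mul_nonneg hr₂.le hv'.1
      have h3 : r₂ * v x t * (-1 + b * u x t - v x t)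
          ≤ r₂ * v x t * (-(1/2 : ℝ)) := mul_le_mul_of_nonneg_left hbu h2
      nlinarith [hv'.1, mul_le_mul_of_nonneg_right
        (show d₂ * ((∫ y : ℝ, J₂ y * Real.exp (lamv * y)) - 1) + lamv * s
          ≤ r₂ / 2 from hlamv2) hv'.1]
  -- conclude
  intro ζ hζ
  constructor
  · intro _ ε hε
    have := final_step 1 lamu s ζ Mu one_pos hlamu hζ u hucomp ε hε
    exact this
  · intro _ ε hε
    exact final_step (b - 1) lamv s ζ Mv (by linarith) hlamv hζ v hvcomp ε hε
end
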